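/- arXiv:0707.3532 — 7 statements merged into one kernel-verified Lean document; each statement's English description precedes it below -/
import Mathlib

section
/- Let P be a transition probability function on a separable metric space X and let μ, μ₁ be probability measures invariant under P (i.e. μP = μ and μ₁P = μ₁), with μ₁ absolutely continuous with respect to μ. Suppose every Borel set A that is μ-invariant (i.e. P(·,A) = 1_A μ-almost everywhere) has μ(A) = 0 or μ(A) = 1. Then μ₁ = μ. -/
open MeasureTheory Set
open scoped ENNReal NNReal

section StmtAux
open Filter
open scoped Topology

variable {X : Type*} [MeasurableSpace X]


lemma aux_eq_of_le_univ {ρ ν : Measure X} [IsFiniteMeasure ν] (h : ρ ≤ ν)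
    (hu : ρ Set.univ = ν Set.univ) : ρ = ν := by
  haveI : IsFiniteMeasure ρ := isFiniteMeasure_of_le ν h
  ext A hA
  have h1 : ρ A + ρ Aᶜ = ν A + ν Aᶜ := by
    rw [measure_add_measure_compl hA, measure_add_measure_compl hA, hu]
  have h2 : ρ A ≤ ν A := Measure.le_iff'.mp h A
  have h3 : ρ Aᶜ ≤ ν Aᶜ := Measure.le_iff'.mp h Aᶜ
  by_contra hne
  have hlt : ρ A < ν A := lt_of_le_of_ne h2 hne
  have : ρ A + ρ Aᶜ < ν A + ν Aᶜ :=
    ENNReal.add_lt_add_of_lt_of_le (measure_ne_top ρ Aᶜ) hlt h3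
  exact absurd h1 this.ne

lemma aux_ae_le_of_withDensity_le {μ : Measure X} [IsFiniteMeasure μ] {a b : X → ℝ≥0∞}
    (ha : Measurable a) (h : μ.withDensity a ≤ μ.withDensity b) : a ≤ᵐ[μ] b := by
  refine ae_le_of_forall_setLIntegral_le_of_sigmaFinite ha (fun s hs _ => ?_)
  rw [← withDensity_apply a hs, ← withDensity_apply b hs]
  exact Measure.le_iff'.mp h s

lemma aux_bind_mono {ρ σ : Measure X} {P : X → Measure X} (hP : Measurable P) (h : ρ ≤ σ) :
    ρ.bind P ≤ σ.bind P := by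
  refine Measure.le_iff.mpr (fun A hA => ?_)
  rw [Measure.bind_apply hA hP.aemeasurable, Measure.bind_apply hA hP.aemeasurable]
  exact lintegral_mono' h le_rfl

lemma aux_bind_smul {ρ : Measure X} {P : X → Measure X} (hP : Measurable P) (c : ℝ≥0∞) :
    (c • ρ).bind P = c • ρ.bind P := by
  ext A hA
  rw [Measure.bind_apply hA hP.aemeasurable, Measure.smul_apply, smul_eq_mul,
    Measure.bind_apply hA hP.aemeasurable, lintegral_smul_measure, smul_eq_mul]

lemma aux_bind_univ {ρ : Measure X} {P : X → Measure X} (hP : Measurable P)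
    (hprob : ∀ x, IsProbabilityMeasure (P x)) : ρ.bind P Set.univ = ρ Set.univ := by
  rw [Measure.bind_apply MeasurableSet.univ hP.aemeasurable]
  simp [(hprob _).measure_univ]

lemma aux_key'
    (P : X → Measure X) (hPprob : ∀ x, IsProbabilityMeasure (P x)) (hPmeas : Measurable P)
    (μ μ₁ : Measure X) [IsProbabilityMeasure μ] [IsProbabilityMeasure μ₁]
    (hinv : μ.bind P = μ) (hinv₁ : μ₁.bind P = μ₁)
    {f : X → ℝ≥0∞} (hf : Measurable f) (hμ₁ : μ.withDensity f = μ₁)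
    (T : ℝ≥0∞) :
    ∀ᵐ x ∂μ, (T < f x → P x {y | T < f y} = 1) ∧ (f x < T → P x {y | T < f y} = 0) := by
  set B : Set X := {y | T < f y} with hBdef
  have hB : MeasurableSet B := measurableSet_lt measurable_const hf
  set m : X → ℝ≥0∞ := fun x => min (f x) T with hmdef
  have hm : Measurable m := hf.min measurable_const
  set ν' : Measure X := μ₁ ⊓ (T • μ) with hν'def
  haveI : IsFiniteMeasure ν' := isFiniteMeasure_of_le μ₁ inf_le_left
  have hbind : ν'.bind P = ν' := by
    refine aux_eq_of_le_univ (le_inf ?_ ?_) (aux_bind_univ hPmeas hPprob)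
    · exact (aux_bind_mono hPmeas inf_le_left).trans_eq hinv₁
    · exact (aux_bind_mono hPmeas inf_le_right).trans
        (le_of_eq (by rw [aux_bind_smul hPmeas, hinv]))
  have hac : ν' ≪ μ :=
    (Measure.absolutelyContinuous_of_le inf_le_right).trans Measure.smul_absolutelyContinuous
  have hgdef : μ.withDensity (ν'.rnDeriv μ) = ν' := Measure.withDensity_rnDeriv_eq _ _ hac
  have hgle_f : ν'.rnDeriv μ ≤ᵐ[μ] f :=
    aux_ae_le_of_withDensity_le (Measure.measurable_rnDeriv _ _)
      (by rw [hgdef, hμ₁]; exact inf_le_left)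
  have hgle_T : ν'.rnDeriv μ ≤ᵐ[μ] fun _ => T :=
    aux_ae_le_of_withDensity_le (Measure.measurable_rnDeriv _ _)
      (by rw [hgdef, withDensity_const]; exact inf_le_right)
  have hνm : μ.withDensity m = ν' := by
    refine le_antisymm (le_inf ?_ ?_) ?_
    · rw [← hμ₁]; exact withDensity_mono (ae_of_all _ fun x => min_le_left _ _)
    · rw [← withDensity_const]; exact withDensity_mono (ae_of_all _ fun x => min_le_right _ _)
    · rw [← hgdef]
      refine withDensity_mono ?_
      filter_upwards [hgle_f, hgle_T] with x h1 h2 using le_min h1 h2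
  -- part 1
  have hk : Measurable fun x => P x Bᶜ := (Measure.measurable_coe hB.compl).comp hPmeas
  have e1 : μ₁ Bᶜ = ∫⁻ x, f x * P x Bᶜ ∂μ := by
    conv_lhs => rw [← hinv₁]
    rw [Measure.bind_apply hB.compl hPmeas.aemeasurable, ← hμ₁,
      lintegral_withDensity_eq_lintegral_mul μ hf hk]
    rfl
  have e2 : ν' Bᶜ = ∫⁻ x, m x * P x Bᶜ ∂μ := by
    conv_lhs => rw [← hbind]
    rw [Measure.bind_apply hB.compl hPmeas.aemeasurable, ← hνm,
      lintegral_withDensity_eq_lintegral_mul μ hm hk]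
    rfl
  have e3 : μ₁ Bᶜ = ν' Bᶜ := by
    rw [← hμ₁, ← hνm, withDensity_apply _ hB.compl, withDensity_apply _ hB.compl]
    refine setLIntegral_congr_fun hB.compl (fun x hx => ?_)
    have hxle : f x ≤ T := not_lt.mp hx
    simp [hmdef, min_eq_left hxle]
  have hfin1 : ∫⁻ x, m x * P x Bᶜ ∂μ ≠ ∞ := by rw [← e2]; exact measure_ne_top _ _
  have hsum1 : ∫⁻ x, m x * P x Bᶜ ∂μ + ∫⁻ x, (f x - m x) * P x Bᶜ ∂μ
      = ∫⁻ x, m x * P x Bᶜ ∂μ + 0 := by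
    rw [add_zero, ← lintegral_add_left (f := fun x => m x * P x Bᶜ) (hm.mul hk), ← e2, ← e3, e1]
    refine lintegral_congr fun x => ?_
    rw [← add_mul, add_tsub_cancel_of_le (min_le_left _ _)]
  have hz1 : (fun x => (f x - m x) * P x Bᶜ) =ᵐ[μ] 0 :=
    (lintegral_eq_zero_iff ((hf.sub hm).mul hk)).mp
      ((ENNReal.add_right_inj hfin1).mp hsum1)
  -- part 2
  have hl : Measurable fun x => P x B := (Measure.measurable_coe hB).comp hPmeas
  have eA : (T • μ) B = ∫⁻ x, T * P x B ∂μ := by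
    rw [lintegral_const_mul T hl, ← Measure.bind_apply hB hPmeas.aemeasurable, hinv,
      Measure.smul_apply, smul_eq_mul]
  have eB : ν' B = ∫⁻ x, m x * P x B ∂μ := by
    conv_lhs => rw [← hbind]
    rw [Measure.bind_apply hB hPmeas.aemeasurable, ← hνm,
      lintegral_withDensity_eq_lintegral_mul μ hm hl]
    rfl
  have eC : (T • μ) B = ν' B := by
    rw [← hνm, withDensity_apply _ hB, Measure.smul_apply, smul_eq_mul]
    have : ∫⁻ x in B, m x ∂μ = ∫⁻ x in B, T ∂μ :=
      setLIntegral_congr_fun hB (fun x hx => min_eq_right (le_of_lt hx))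
    rw [this, setLIntegral_const]
  have hfin2 : ∫⁻ x, m x * P x B ∂μ ≠ ∞ := by rw [← eB]; exact measure_ne_top _ _
  have hsum2 : ∫⁻ x, m x * P x B ∂μ + ∫⁻ x, (T - m x) * P x B ∂μ
      = ∫⁻ x, m x * P x B ∂μ + 0 := by
    rw [add_zero, ← lintegral_add_left (f := fun x => m x * P x B) (hm.mul hl), ← eB, ← eC, eA]
    refine lintegral_congr fun x => ?_
    rw [← add_mul, add_tsub_cancel_of_le (min_le_right _ _)]
  have hz2 : (fun x => (T - m x) * P x B) =ᵐ[μ] 0 :=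
    (lintegral_eq_zero_iff ((measurable_const.sub hm).mul hl)).mp
      ((ENNReal.add_right_inj hfin2).mp hsum2)
  filter_upwards [hz1, hz2] with x hx1 hx2
  simp only [Pi.zero_apply] at hx1 hx2
  constructor
  · intro hlt
    have hne : f x - m x ≠ 0 := by
      rw [hmdef]
      simp only [min_eq_right hlt.le]
      exact fun h => absurd (tsub_eq_zero_iff_le.mp h) (not_le.mpr hlt)
    have hPc : P x Bᶜ = 0 := by
      rcases mul_eq_zero.mp hx1 with h | h
      · exact absurd h hne
      · exact h
    have hcompl := measure_add_measure_compl (μ := P x) hB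
    rw [hPc, add_zero, (hPprob x).measure_univ] at hcompl
    exact hcompl
  · intro hlt
    have hne : T - m x ≠ 0 := by
      rw [hmdef]
      simp only [min_eq_left hlt.le]
      exact fun h => absurd (tsub_eq_zero_iff_le.mp h) (not_le.mpr hlt)
    rcases mul_eq_zero.mp hx2 with h | h
    · exact absurd h hne
    · exact h



end StmtAux

open Filter
open scoped Topology

/-- If `P` is a transition probability function on a separable metric
space, `μ, μ₁` are `P`-invariant Borel probability measures with `μ₁ ≪ μ`, and every
`μ`-invariant Borel set (`P(·,A) = 1_A` μ-a.e.) has `μ`-measure `0` or `1`,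
then `μ₁ = μ`. -/
theorem stmt0 {X : Type*} [MetricSpace X] [TopologicalSpace.SeparableSpace X]
    [MeasurableSpace X] [BorelSpace X]
    (P : X → Measure X) (hPprob : ∀ x, IsProbabilityMeasure (P x)) (hPmeas : Measurable P)
    (μ μ₁ : Measure X) [IsProbabilityMeasure μ] [IsProbabilityMeasure μ₁]
    (hinv : μ.bind P = μ) (hinv₁ : μ₁.bind P = μ₁) (habs : μ₁ ≪ μ)
    (herg : ∀ A : Set X, MeasurableSet A →
      (∀ᵐ x ∂μ, P x A = A.indicator (fun _ => (1 : ℝ≥0∞)) x) → μ A = 0 ∨ μ A = 1) :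
    μ₁ = μ := by
  set f : X → ℝ≥0∞ := μ₁.rnDeriv μ with hfdef
  have hf : Measurable f := Measure.measurable_rnDeriv _ _
  have hμ₁ : μ.withDensity f = μ₁ := Measure.withDensity_rnDeriv_eq _ _ habs
  have hint : ∫⁻ x, f x ∂μ = 1 := by
    have h := congrArg (fun ν : Measure X => ν Set.univ) hμ₁
    simpa only [withDensity_apply _ MeasurableSet.univ, Measure.restrict_univ,
      measure_univ] using h
  -- ergodicity at good levels
  have hBig : ∀ t : ℝ, 0 < t → μ {x | f x = ENNReal.ofReal t} = 0 →
      μ {x | ENNReal.ofReal t < f x} = 0 ∨ μ {x | ENNReal.ofReal t < f x} = 1 := by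
    intro t ht hlev
    set T := ENNReal.ofReal t with hTdef
    have hB : MeasurableSet {x | T < f x} := measurableSet_lt measurable_const hf
    refine herg _ hB ?_
    have hlev' : ∀ᵐ x ∂μ, f x ≠ T := by
      rw [ae_iff]; simpa using hlev
    filter_upwards [aux_key' P hPprob hPmeas μ μ₁ hinv hinv₁ hf hμ₁ T, hlev']
      with x hx hne
    rcases lt_trichotomy (f x) T with h | h | h
    · have hnotmem : x ∉ {y | T < f y} := by simp [not_lt.mpr h.le]
      rw [Set.indicator_of_notMem hnotmem]
      exact hx.2 h
    · exact absurd h hne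
    · rw [Set.indicator_of_mem (by exact h)]
      exact hx.1 h
  -- countably many bad levels
  set Bad : Set ℝ := {t : ℝ | 0 < t ∧ 0 < μ {x | f x = ENNReal.ofReal t}} with hBaddef
  have hBadc : Bad.Countable := by
    have hmble : ∀ t : ℝ, MeasurableSet
        (if 0 < t then {x | f x = ENNReal.ofReal t} else (∅ : Set X)) := by
      intro t
      split_ifs
      · exact hf (measurableSet_singleton _)
      · exact MeasurableSet.empty
    have hdisj : Pairwise (Function.onFun Disjoint
        fun t : ℝ => if 0 < t then {x | f x = ENNReal.ofReal t} else (∅ : Set X)) := by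
      intro s t hst
      simp only [Function.onFun]
      split_ifs with h1 h2 h2
      · refine Set.disjoint_left.mpr fun x hx1 hx2 => hst ?_
        have hE : ENNReal.ofReal s = ENNReal.ofReal t := by
          rw [← show f x = ENNReal.ofReal s from hx1,
            ← show f x = ENNReal.ofReal t from hx2]
        exact (ENNReal.ofReal_eq_ofReal_iff h1.le h2.le).mp hE
      all_goals simp
    have hc := Measure.countable_meas_pos_of_disjoint_of_meas_iUnion_ne_top (μ := μ)
      hmble hdisj (measure_ne_top μ _)
    refine hc.mono fun t ht => ?_
    rcases ht with ⟨ht0, htpos⟩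
    simpa [if_pos ht0] using htpos
  -- good levels exist in any interval
  have good_exists : ∀ a b : ℝ, 0 ≤ a → a < b →
      ∃ t, a < t ∧ t < b ∧ μ {x | f x = ENNReal.ofReal t} = 0 := by
    intro a b ha hab
    have hunc : ¬ (Set.Ioo a b).Countable := by
      intro hc
      have h0 : volume (Set.Ioo a b) = 0 := hc.measure_zero _
      rw [Real.volume_Ioo] at h0
      rw [ENNReal.ofReal_eq_zero] at h0
      linarith
    have hns : ¬ (Set.Ioo a b ⊆ Bad) := fun hsub => hunc (hBadc.mono hsub)
    obtain ⟨t, htIoo, htBad⟩ := Set.not_subset.mp hns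
    refine ⟨t, htIoo.1, htIoo.2, ?_⟩
    have ht0 : 0 < t := lt_of_le_of_lt ha htIoo.1
    by_contra h
    exact htBad ⟨ht0, pos_iff_ne_zero.mpr h⟩
  -- the set of levels with full upper tail
  set I : Set ℝ := {t : ℝ | 0 < t ∧ μ {x | ENNReal.ofReal t < f x} = 1} with hIdef
  have hIbdd : ∀ t ∈ I, t ≤ 1 := by
    rintro t ⟨ht0, ht1⟩
    have h1 : ENNReal.ofReal t ≤ ∫⁻ x, f x ∂μ := by
      calc ENNReal.ofReal t = ENNReal.ofReal t * μ {x | ENNReal.ofReal t < f x} := by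
            rw [ht1, mul_one]
        _ = ∫⁻ _ in {x | ENNReal.ofReal t < f x}, ENNReal.ofReal t ∂μ :=
            (setLIntegral_const _ _).symm
        _ ≤ ∫⁻ x in {x | ENNReal.ofReal t < f x}, f x ∂μ :=
            setLIntegral_mono hf fun x hx => le_of_lt hx
        _ ≤ ∫⁻ x, f x ∂μ := setLIntegral_le_lintegral _ _
    rw [hint] at h1
    exact ENNReal.ofReal_le_one.mp h1
  have hbddA : BddAbove I := ⟨1, fun t ht => hIbdd t ht⟩
  have hInonempty : I.Nonempty := by
    by_contra hIe
    have hzero : ∀ t : ℝ, 0 < t → μ {x | f x = ENNReal.ofReal t} = 0 →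
        μ {x | ENNReal.ofReal t < f x} = 0 := by
      intro t ht hl
      rcases hBig t ht hl with h | h
      · exact h
      · exact absurd ⟨t, ht, h⟩ hIe
    have hch : ∀ n : ℕ, ∃ t : ℝ, 0 < t ∧ t < 1/(n+1) ∧
        μ {x | ENNReal.ofReal t < f x} = 0 := by
      intro n
      obtain ⟨t, h1, h2, h3⟩ := good_exists 0 (1/(n+1)) le_rfl (by positivity)
      exact ⟨t, h1, h2, hzero t h1 h3⟩
    choose u hu0 hulb hunull using hch
    have htendu : Tendsto u atTop (𝓝 0) := by
      exact tendsto_of_tendsto_of_tendsto_of_le_of_le (tendsto_const_nhds (x := (0:ℝ)))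
        tendsto_one_div_add_atTop_nhds_zero_nat
        (fun n => (hu0 n).le) (fun n => (hulb n).le)
    have htend : Tendsto (fun n : ℕ => ENNReal.ofReal (u n)) atTop (𝓝 0) := by
      have h0 := (ENNReal.continuous_ofReal.tendsto 0).comp htendu
      rw [ENNReal.ofReal_zero] at h0
      exact h0
    have hsub : {x | 0 < f x} ⊆ ⋃ n, {x | ENNReal.ofReal (u n) < f x} := by
      intro x hx
      obtain ⟨n, hn⟩ := (htend.eventually_lt_const hx).exists
      exact Set.mem_iUnion.mpr ⟨n, hn⟩
    have h0 : μ {x | 0 < f x} = 0 :=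
      measure_mono_null hsub (measure_iUnion_null hunull)
    have hfz : f =ᵐ[μ] 0 := by
      rw [Filter.EventuallyEq, ae_iff]
      simpa [pos_iff_ne_zero] using h0
    have : (1 : ℝ≥0∞) = 0 := by
      rw [← hint, lintegral_congr_ae hfz]
      simp
    exact one_ne_zero this
  set t₀ : ℝ := sSup I with ht₀def
  have ht₀pos : 0 < t₀ := by
    obtain ⟨s, hs⟩ := hInonempty
    exact lt_of_lt_of_le hs.1 (le_csSup hbddA hs)
  -- lower bound a.e.
  have hlow : ∀ᵐ x ∂μ, ENNReal.ofReal t₀ ≤ f x := by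
    have hch : ∀ n : ℕ, ∃ s ∈ I, t₀ - 1/(n+1) < s := by
      intro n
      exact exists_lt_of_lt_csSup hInonempty (by
        have : (0:ℝ) < 1/(n+1) := by positivity
        linarith)
    choose s hsI hslb using hch
    have hsle : ∀ n, s n ≤ t₀ := fun n => le_csSup hbddA (hsI n)
    have htends : Tendsto s atTop (𝓝 t₀) := by
      have hlo : Tendsto (fun n : ℕ => t₀ - 1/(n+1)) atTop (𝓝 t₀) := by
        have := tendsto_const_nhds (x := t₀) (f := atTop (α := ℕ)) |>.sub
          tendsto_one_div_add_atTop_nhds_zero_nat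
        simpa using this
      exact tendsto_of_tendsto_of_tendsto_of_le_of_le hlo tendsto_const_nhds
        (fun n => (hslb n).le) hsle
    have htend : Tendsto (fun n : ℕ => ENNReal.ofReal (s n)) atTop
        (𝓝 (ENNReal.ofReal t₀)) :=
      (ENNReal.continuous_ofReal.tendsto _).comp htends
    have hnull : ∀ n, μ {x | f x ≤ ENNReal.ofReal (s n)} = 0 := by
      intro n
      have h1 : μ {x | ENNReal.ofReal (s n) < f x} = 1 := (hsI n).2
      have hBm : MeasurableSet {x | ENNReal.ofReal (s n) < f x} :=
        measurableSet_lt measurable_const hf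
      have hcompl := measure_compl hBm (measure_ne_top μ _)
      rw [h1, measure_univ, tsub_self] at hcompl
      have hset : {x | f x ≤ ENNReal.ofReal (s n)} =
          {x | ENNReal.ofReal (s n) < f x}ᶜ := by
        ext x; simp [not_lt]
      rw [hset, hcompl]
    have hsub : {x | f x < ENNReal.ofReal t₀} ⊆
        ⋃ n, {x | f x ≤ ENNReal.ofReal (s n)} := by
      intro x hx
      obtain ⟨n, hn⟩ := (htend.eventually_const_lt hx).exists
      exact Set.mem_iUnion.mpr ⟨n, hn.le⟩
    have h0 : μ {x | f x < ENNReal.ofReal t₀} = 0 :=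
      measure_mono_null hsub (measure_iUnion_null hnull)
    rw [ae_iff]
    simpa [not_le] using h0
  -- upper bound a.e.
  have hupp : ∀ᵐ x ∂μ, f x ≤ ENNReal.ofReal t₀ := by
    have hch : ∀ n : ℕ, ∃ u, t₀ < u ∧ u < t₀ + 1/(n+1) ∧
        μ {x | ENNReal.ofReal u < f x} = 0 := by
      intro n
      obtain ⟨u, h1, h2, h3⟩ := good_exists t₀ (t₀ + 1/(n+1)) ht₀pos.le
        (lt_add_of_pos_right t₀ (by positivity))
      have hu0 : 0 < u := ht₀pos.trans h1
      rcases hBig u hu0 h3 with h | h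
      · exact ⟨u, h1, h2, h⟩
      · exact absurd (le_csSup hbddA ⟨hu0, h⟩) (not_le.mpr h1)
    choose u hulb huub hunull using hch
    have htendu : Tendsto u atTop (𝓝 t₀) := by
      have hhi : Tendsto (fun n : ℕ => t₀ + 1/(n+1)) atTop (𝓝 t₀) := by
        have := tendsto_const_nhds (x := t₀) (f := atTop (α := ℕ)) |>.add
          tendsto_one_div_add_atTop_nhds_zero_nat
        simpa using this
      exact tendsto_of_tendsto_of_tendsto_of_le_of_le tendsto_const_nhds hhi
        (fun n => (hulb n).le) (fun n => (huub n).le)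
    have htend : Tendsto (fun n : ℕ => ENNReal.ofReal (u n)) atTop
        (𝓝 (ENNReal.ofReal t₀)) :=
      (ENNReal.continuous_ofReal.tendsto _).comp htendu
    have hsub : {x | ENNReal.ofReal t₀ < f x} ⊆
        ⋃ n, {x | ENNReal.ofReal (u n) < f x} := by
      intro x hx
      obtain ⟨n, hn⟩ := (htend.eventually_lt_const hx).exists
      exact Set.mem_iUnion.mpr ⟨n, hn⟩
    have h0 : μ {x | ENNReal.ofReal t₀ < f x} = 0 :=
      measure_mono_null hsub (measure_iUnion_null hunull)
    rw [ae_iff]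
    simpa [not_le] using h0
  have heq : f =ᵐ[μ] fun _ => ENNReal.ofReal t₀ :=
    hupp.mp (hlow.mono fun x h1 h2 => le_antisymm h2 h1)
  have hone : ENNReal.ofReal t₀ = 1 := by
    rw [← hint, lintegral_congr_ae heq, lintegral_const, measure_univ, mul_one]
  have heq1 : f =ᵐ[μ] fun _ => (1 : ℝ≥0∞) := by
    rw [← hone]; exact heq
  rw [← hμ₁, withDensity_congr_ae heq1, withDensity_const, one_smul]
end

section
/- Let P be a transition probability function on a separable metric space X and let τ be a finite signed Borel measure with τP = τ (where the action of P is extended linearly). If τ = τ⁺ − τ⁻ is the Jordan decomposition, then τ⁺P = τ⁺ and τ⁻P = τ⁻. -/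
open MeasureTheory Set
open scoped ENNReal NNReal

private theorem stmt1_aux {X : Type*} [MeasurableSpace X]
    (P : X → Measure X) (hPprob : ∀ x, IsProbabilityMeasure (P x)) (hPmeas : Measurable P)
    (μ ν : Measure X) [IsFiniteMeasure μ] [IsFiniteMeasure ν] (h : μ ⟂ₘ ν)
    (hinv : μ.bind P + ν = ν.bind P + μ) :
    μ.bind P = μ ∧ ν.bind P = ν := by
  obtain ⟨s, hs, hμs, hνs⟩ := h
  have key : ∀ A : Set X, (μ.bind P) A + ν A = (ν.bind P) A + μ A := by
    intro A
    have := congrArg (fun ρ : Measure X => ρ A) hinv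
    simpa [Measure.add_apply] using this
  have htot : ∀ ρ : Measure X, (ρ.bind P) univ = ρ univ := by
    intro ρ
    rw [Measure.bind_apply MeasurableSet.univ hPmeas.aemeasurable]
    calc ∫⁻ x, P x univ ∂ρ = ∫⁻ _, 1 ∂ρ :=
          lintegral_congr fun x => (hPprob x).measure_univ
      _ = ρ univ := lintegral_one
  have hμsc : μ sᶜ = μ univ := by
    have := measure_add_measure_compl (μ := μ) hs
    rwa [hμs, zero_add] at this
  -- evaluate the invariance identity on sᶜ
  have hkc := key sᶜ
  rw [hνs, add_zero, hμsc] at hkc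
  have hle : (μ.bind P) sᶜ ≤ μ univ := (measure_mono (subset_univ _)).trans (htot μ).le
  have hνPsc : (ν.bind P) sᶜ = 0 := by
    have h1 : (ν.bind P) sᶜ + μ univ = 0 + μ univ := by
      rw [zero_add]
      exact le_antisymm (hkc ▸ hle) le_add_self
    exact WithTop.add_right_cancel (measure_ne_top μ univ) h1
  rw [hνPsc, zero_add] at hkc
  -- hkc : (μ.bind P) sᶜ = μ univ
  have hμPs : (μ.bind P) s = 0 := by
    have hcomp := measure_add_measure_compl (μ := μ.bind P) hs
    rw [hkc, htot μ] at hcomp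
    have : (μ.bind P) s + μ univ = 0 + μ univ := by rw [zero_add]; exact hcomp
    exact WithTop.add_right_cancel (measure_ne_top μ univ) this
  constructor
  · ext A hA
    have h2 : (μ.bind P) (A ∩ s) = 0 :=
      measure_mono_null inter_subset_right hμPs
    have h3 : μ (A ∩ s) = 0 := measure_mono_null inter_subset_right hμs
    have hsplit : (μ.bind P) A = (μ.bind P) (A ∩ sᶜ) := by
      rw [← measure_inter_add_diff A hs, h2, zero_add, diff_eq]
    have hsplitμ : μ A = μ (A ∩ sᶜ) := by
      rw [← measure_inter_add_diff A hs, h3, zero_add, diff_eq]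
    have hk := key (A ∩ sᶜ)
    have hν1 : ν (A ∩ sᶜ) = 0 := measure_mono_null inter_subset_right hνs
    have hν2 : (ν.bind P) (A ∩ sᶜ) = 0 := measure_mono_null inter_subset_right hνPsc
    rw [hν1, hν2, add_zero, zero_add] at hk
    rw [hsplit, hsplitμ, hk]
  · ext A hA
    have h2 : (ν.bind P) (A \ s) = 0 :=
      measure_mono_null (diff_eq (s := A) (t := s) ▸ inter_subset_right) hνPsc
    have h3 : ν (A \ s) = 0 :=
      measure_mono_null (diff_eq (s := A) (t := s) ▸ inter_subset_right) hνs
    have hsplit : (ν.bind P) A = (ν.bind P) (A ∩ s) := by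
      rw [← measure_inter_add_diff A hs, h2, add_zero]
    have hsplitν : ν A = ν (A ∩ s) := by
      rw [← measure_inter_add_diff A hs, h3, add_zero]
    have hk := key (A ∩ s)
    have hμ1 : μ (A ∩ s) = 0 := measure_mono_null inter_subset_right hμs
    have hμ2 : (μ.bind P) (A ∩ s) = 0 := measure_mono_null inter_subset_right hμPs
    rw [hμ1, hμ2, add_zero, zero_add] at hk
    rw [hsplit, hsplitν, hk]

/-- If `P` is a transition probability function on a separable metric
space and `τ` is a finite signed Borel measure with `τP = τ` (stated, via the Jordan
decomposition `τ = τ⁺ - τ⁻`, as `τ⁺P + τ⁻ = τ⁻P + τ⁺`), then `τ⁺P = τ⁺` and `τ⁻P = τ⁻`. -/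
theorem stmt1 {X : Type*} [MetricSpace X] [TopologicalSpace.SeparableSpace X]
    [MeasurableSpace X] [BorelSpace X]
    (P : X → Measure X) (hPprob : ∀ x, IsProbabilityMeasure (P x)) (hPmeas : Measurable P)
    (τ : SignedMeasure X)
    (hinv : τ.toJordanDecomposition.posPart.bind P + τ.toJordanDecomposition.negPart
      = τ.toJordanDecomposition.negPart.bind P + τ.toJordanDecomposition.posPart) :
    τ.toJordanDecomposition.posPart.bind P = τ.toJordanDecomposition.posPart ∧
      τ.toJordanDecomposition.negPart.bind P = τ.toJordanDecomposition.negPart := by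
  exact stmt1_aux P hPprob hPmeas _ _ τ.toJordanDecomposition.mutuallySingular hinv
end

section
/- Let P be a transition probability function on a separable metric space X and μ an invariant probability measure. Then μ is ergodic (an extreme point of the convex set of P-invariant probability measures) if and only if every μ-invariant Borel set A (meaning P(·,A) = 1_A μ-a.e.) satisfies μ(A) ∈ {0,1}. -/
open MeasureTheory Set
open scoped ENNReal NNReal

private lemma ae_eq_of_ae_le_of_lintegral_ge {X : Type*} [MeasurableSpace X] {μ : Measure X}
    {f g : X → ℝ≥0∞} (hf : Measurable f) (hg : Measurable g)
    (hfg : ∀ᵐ x ∂μ, f x ≤ g x) (hfin : ∫⁻ x, g x ∂μ ≠ ∞)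
    (hle : ∫⁻ x, g x ∂μ ≤ ∫⁻ x, f x ∂μ) : ∀ᵐ x ∂μ, f x = g x := by
  have hmono : ∫⁻ x, f x ∂μ ≤ ∫⁻ x, g x ∂μ := lintegral_mono_ae hfg
  have hffin : ∫⁻ x, f x ∂μ ≠ ∞ := (lt_of_le_of_lt hmono hfin.lt_top).ne
  have hsub : ∫⁻ x, g x - f x ∂μ = ∫⁻ x, g x ∂μ - ∫⁻ x, f x ∂μ := lintegral_sub hf hffin hfg
  have h0 : ∫⁻ x, g x - f x ∂μ = 0 := by rw [hsub]; exact tsub_eq_zero_of_le hle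
  have h1 := (lintegral_eq_zero_iff (hg.sub hf)).mp h0
  filter_upwards [h1, hfg] with x hx1 hx2
  exact le_antisymm hx2 (tsub_eq_zero_iff_le.mp hx1)

private lemma bind_restrict_invariant {X : Type*} [MeasurableSpace X]
    (P : X → Measure X) (hPprob : ∀ x, IsProbabilityMeasure (P x)) (hPmeas : Measurable P)
    (μ : Measure X) [IsProbabilityMeasure μ] (hinv : μ.bind P = μ)
    {A : Set X} (hAm : MeasurableSet A)
    (hA : ∀ᵐ x ∂μ, P x A = A.indicator (fun _ => (1 : ℝ≥0∞)) x) :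
    (μ.restrict A).bind P = μ.restrict A := by
  ext B hB
  rw [Measure.bind_apply hB hPmeas.aemeasurable, Measure.restrict_apply hB]
  have mb : Measurable fun x => P x (B ∩ A) := (Measure.measurable_coe (hB.inter hAm)).comp hPmeas
  have key : ∀ᵐ x ∂(μ.restrict A), P x B = P x (B ∩ A) := by
    filter_upwards [ae_restrict_of_ae hA, ae_restrict_mem hAm] with x hx hxA
    haveI := hPprob x
    have h1 : P x A = 1 := by simpa [indicator_of_mem hxA] using hx
    have hAc : P x Aᶜ = 0 := by rw [prob_compl_eq_one_sub hAm, h1, tsub_self]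
    refine le_antisymm ?_ (measure_mono inter_subset_left)
    calc P x B ≤ P x ((B ∩ A) ∪ Aᶜ) := measure_mono (fun y hy => by
          by_cases hyA : y ∈ A
          · exact Or.inl ⟨hy, hyA⟩
          · exact Or.inr hyA)
      _ ≤ P x (B ∩ A) + P x Aᶜ := measure_union_le _ _
      _ = P x (B ∩ A) := by rw [hAc, add_zero]
  rw [lintegral_congr_ae key]
  have h2 : ∫⁻ x in Aᶜ, P x (B ∩ A) ∂μ = 0 := by
    rw [lintegral_eq_zero_iff mb]
    filter_upwards [ae_restrict_of_ae hA, ae_restrict_mem hAm.compl] with x hx hxA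
    have h0 : P x A = 0 := by simpa [indicator_of_notMem hxA] using hx
    exact le_antisymm (le_trans (measure_mono inter_subset_right) h0.le) zero_le
  calc ∫⁻ x in A, P x (B ∩ A) ∂μ = ∫⁻ x, P x (B ∩ A) ∂μ := by
        rw [← lintegral_add_compl _ hAm (μ := μ), h2, add_zero]
    _ = (μ.bind P) (B ∩ A) := (Measure.bind_apply (hB.inter hAm) hPmeas.aemeasurable).symm
    _ = μ (B ∩ A) := by rw [hinv]

private lemma invariant_ac_eq {X : Type*} [MeasurableSpace X]
    (P : X → Measure X) (hPprob : ∀ x, IsProbabilityMeasure (P x)) (hPmeas : Measurable P)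
    (μ : Measure X) [IsProbabilityMeasure μ] (hinv : μ.bind P = μ)
    (h01 : ∀ A : Set X, MeasurableSet A →
        (∀ᵐ x ∂μ, P x A = A.indicator (fun _ => (1 : ℝ≥0∞)) x) → μ A = 0 ∨ μ A = 1)
    (μ₁ : Measure X) [IsProbabilityMeasure μ₁] (hi₁ : μ₁.bind P = μ₁)
    (hac : μ₁ ≪ μ) : μ₁ = μ := by
  set h := μ₁.rnDeriv μ with hhdef
  have hmeas : Measurable h := Measure.measurable_rnDeriv μ₁ μ
  have hwd : μ.withDensity h = μ₁ := Measure.withDensity_rnDeriv_eq μ₁ μ hac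
  have hfinae : ∀ᵐ x ∂μ, h x < ∞ := Measure.rnDeriv_lt_top μ₁ μ
  have hint : ∫⁻ x, h x ∂μ = 1 := by
    have e : (μ.withDensity h) univ = μ₁ univ := by rw [hwd]
    rwa [withDensity_apply _ MeasurableSet.univ, Measure.restrict_univ, measure_univ] at e
  suffices hone : ∀ᵐ x ∂μ, h x = 1 by
    calc μ₁ = μ.withDensity h := hwd.symm
      _ = μ.withDensity 1 := withDensity_congr_ae hone
      _ = μ := withDensity_one
  by_contra hne
  -- both {h < 1} and {1 < h} have positive measure
  have hlt : μ {x | h x < 1} ≠ 0 := by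
    intro hz
    apply hne
    have hge : ∀ᵐ x ∂μ, 1 ≤ h x := by
      rw [ae_iff]; simpa [not_le] using hz
    have := ae_eq_of_ae_le_of_lintegral_ge (f := fun _ => (1 : ℝ≥0∞)) measurable_const hmeas hge
      (by rw [hint]; exact ENNReal.one_ne_top)
      (by rw [hint, lintegral_one, measure_univ])
    filter_upwards [this] with x hx using hx.symm
  have hgt : μ {x | 1 < h x} ≠ 0 := by
    intro hz
    apply hne
    have hle' : ∀ᵐ x ∂μ, h x ≤ 1 := by
      rw [ae_iff]; simpa [not_le] using hz
    exact ae_eq_of_ae_le_of_lintegral_ge hmeas measurable_const hle'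
      (by simp) (by rw [hint, lintegral_one, measure_univ])
  have hlt1 : μ {x | h x < 1} < 1 := by
    have hsub : {x | h x < 1} ⊆ {x | 1 < h x}ᶜ := by
      intro x hx
      simp only [mem_compl_iff, mem_setOf_eq, not_lt]
      exact le_of_lt hx
    calc μ {x | h x < 1} ≤ μ {x | 1 < h x}ᶜ := measure_mono hsub
      _ = 1 - μ {x | 1 < h x} := prob_compl_eq_one_sub (hmeas measurableSet_Ioi)
      _ < 1 := ENNReal.sub_lt_self ENNReal.one_ne_top one_ne_zero hgt
  -- find c₀ < 1 with μ {h < c₀} ≠ 0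
  have hcover : {x | h x < 1} ⊆ ⋃ n : ℕ, {x | h x < 1 - (n : ℝ≥0∞)⁻¹} := by
    intro x hx
    have hx1 : h x < 1 := hx
    have hxfin : h x ≠ ∞ := (hx1.trans ENNReal.one_lt_top).ne
    have hpos : (1 : ℝ≥0∞) - h x ≠ 0 := by
      rw [Ne, tsub_eq_zero_iff_le]; exact not_le.mpr hx1
    obtain ⟨n, hn⟩ := ENNReal.exists_inv_nat_lt hpos
    refine mem_iUnion.mpr ⟨n, ?_⟩
    have hadd : h x + (n : ℝ≥0∞)⁻¹ < 1 := by
      calc h x + (n : ℝ≥0∞)⁻¹ < h x + (1 - h x) := ENNReal.add_lt_add_left hxfin hn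
        _ = 1 := add_tsub_cancel_of_le hx1.le
    have hninv : (n : ℝ≥0∞)⁻¹ ≠ ∞ :=
      ((le_add_self.trans_lt hadd).trans ENNReal.one_lt_top).ne
    exact (ENNReal.cancel_of_ne hninv).lt_tsub_of_add_lt_right hadd
  have hex : ∃ n : ℕ, μ {x | h x < 1 - (n : ℝ≥0∞)⁻¹} ≠ 0 := by
    by_contra hz
    push_neg at hz
    exact hlt (measure_mono_null hcover (measure_iUnion_null hz))
  obtain ⟨n, hn0⟩ := hex
  set c₀ : ℝ≥0∞ := 1 - (n : ℝ≥0∞)⁻¹ with hc₀def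
  have hc₀1 : c₀ < 1 :=
    ENNReal.sub_lt_self ENNReal.one_ne_top one_ne_zero
      (ENNReal.inv_ne_zero.mpr (ENNReal.natCast_ne_top n))
  have hc₀fin : c₀ ≠ ∞ := (hc₀1.trans ENNReal.one_lt_top).ne
  -- choose c ∈ (c₀, 1) which is not an atom of the distribution of h
  set T : Set ℝ≥0∞ := {t | 0 < μ {x | h x = t}} with hTdef
  have hT : T.Countable := Measure.countable_meas_level_set_pos hmeas
  have hnotsub : ¬ (Ioo c₀ 1 ⊆ T) := by
    intro hsub
    have himg : Set.Ioo (c₀.toReal) 1 ⊆ ENNReal.toReal '' T := by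
      rintro r ⟨hr1, hr2⟩
      have hr0 : (0 : ℝ) ≤ r := le_of_lt (lt_of_le_of_lt ENNReal.toReal_nonneg hr1)
      refine ⟨ENNReal.ofReal r, hsub ⟨?_, ?_⟩, ENNReal.toReal_ofReal hr0⟩
      · rw [← ENNReal.ofReal_toReal hc₀fin]
        exact (ENNReal.ofReal_lt_ofReal_iff (lt_of_le_of_lt ENNReal.toReal_nonneg hr1)).mpr hr1
      · exact ENNReal.ofReal_lt_one.mpr hr2
    have hcnt : (Set.Ioo (c₀.toReal) 1).Countable := (hT.image _).mono himg
    have hlt' : c₀.toReal < 1 := by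
      rw [← ENNReal.toReal_one]
      exact (ENNReal.toReal_lt_toReal hc₀fin ENNReal.one_ne_top).mpr hc₀1
    have hcard : Cardinal.mk (Set.Ioo (c₀.toReal) 1) ≤ Cardinal.aleph0 :=
      Cardinal.mk_le_aleph0_iff.mpr (Set.countable_coe_iff.mpr hcnt)
    rw [Cardinal.mk_Ioo_real hlt'] at hcard
    exact absurd hcard (not_le.mpr Cardinal.aleph0_lt_continuum)
  obtain ⟨c, hcIoo, hcT⟩ := not_subset.mp hnotsub
  obtain ⟨hc₀c, hc1⟩ := hcIoo
  have hc0 : c ≠ 0 := (zero_le.trans_lt hc₀c).ne'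
  have hcfin : c ≠ ∞ := (hc1.trans ENNReal.one_lt_top).ne
  have hatom : μ {x | h x = c} = 0 := by
    rw [← le_zero_iff]; exact not_lt.mp hcT
  have hatom' : ∀ᵐ x ∂μ, h x ≠ c := by
    rw [ae_iff]; simpa using hatom
  set A : Set X := {x | h x < c} with hAdef
  have hAm : MeasurableSet A := hmeas measurableSet_Iio
  have hμA0 : μ A ≠ 0 := by
    intro hz
    exact hn0 (measure_mono_null (fun x hx => lt_trans hx hc₀c) hz)
  have hμA1 : μ A ≠ 1 := by
    have : μ A ≤ μ {x | h x < 1} := measure_mono (fun x hx => lt_trans hx hc1)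
    exact (lt_of_le_of_lt this hlt1).ne
  -- the function g x = P x A
  set g : X → ℝ≥0∞ := fun x => P x A with hgdef
  have gmeas : Measurable g := (Measure.measurable_coe hAm).comp hPmeas
  have gle1 : ∀ x, g x ≤ 1 := fun x => by
    haveI := hPprob x; exact prob_le_one
  have I1 : ∫⁻ x, g x ∂μ = μ A := by
    rw [hgdef, ← Measure.bind_apply hAm hPmeas.aemeasurable, hinv]
  have I2 : ∫⁻ x, h x * g x ∂μ = ∫⁻ x in A, h x ∂μ := by
    have e1 : ∫⁻ x, g x ∂μ₁ = μ₁ A := by rw [hgdef, ← Measure.bind_apply hAm hPmeas.aemeasurable, hi₁]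
    have e2 : ∫⁻ x, g x ∂μ₁ = ∫⁻ x, h x * g x ∂μ := by
      rw [← hwd, lintegral_withDensity_eq_lintegral_mul μ hmeas gmeas]; rfl
    have e3 : μ₁ A = ∫⁻ x in A, h x ∂μ := by rw [← hwd, withDensity_apply _ hAm]
    rw [← e2, e1, e3]
  have hAfin : ∫⁻ x in A, h x ∂μ ≠ ∞ := by
    refine ne_top_of_le_ne_top (by rw [hint]; exact ENNReal.one_ne_top)
      (setLIntegral_le_lintegral _ _)
  have hgAfin : ∫⁻ x in A, g x ∂μ ≠ ∞ := by
    refine ne_top_of_le_ne_top (measure_ne_top μ A) ?_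
    calc ∫⁻ x in A, g x ∂μ ≤ ∫⁻ _ in A, 1 ∂μ := lintegral_mono (gle1)
      _ = μ A := by simp
  have hT0fin : ∫⁻ x in A, h x * g x ∂μ ≠ ∞ := by
    refine ne_top_of_le_ne_top hAfin (lintegral_mono fun x => ?_)
    exact mul_le_of_le_one_right zero_le (gle1 x)
  have hgAcfin : ∫⁻ x in Aᶜ, h x * g x ∂μ ≠ ∞ := by
    have hb : ∫⁻ x in Aᶜ, h x * g x ∂μ ≤ ∫⁻ x, h x ∂μ :=
      le_trans (lintegral_mono fun x => mul_le_of_le_one_right zero_le (gle1 x))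
        (setLIntegral_le_lintegral _ _)
    exact ne_top_of_le_ne_top (hint ▸ ENNReal.one_ne_top) hb
  have splitI2 : ∫⁻ x in A, h x * g x ∂μ + ∫⁻ x in Aᶜ, h x * g x ∂μ = ∫⁻ x in A, h x ∂μ :=
    (lintegral_add_compl _ hAm).trans I2
  have splitI1 : ∫⁻ x in A, g x ∂μ + ∫⁻ x in Aᶜ, g x ∂μ = μ A :=
    (lintegral_add_compl _ hAm).trans I1
  have oneminus : ∫⁻ x in A, (1 - g x) ∂μ + ∫⁻ x in A, g x ∂μ = μ A := by
    rw [← lintegral_add_left (by fun_prop : Measurable fun x => 1 - g x)]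
    have e : ∀ x, (1 - g x) + g x = 1 := fun x => tsub_add_cancel_of_le (gle1 x)
    simp only [e]
    simp
  have step2eq : ∫⁻ x in Aᶜ, g x ∂μ = ∫⁻ x in A, (1 - g x) ∂μ := by
    have e : ∫⁻ x in A, g x ∂μ + ∫⁻ x in Aᶜ, g x ∂μ
        = ∫⁻ x in A, g x ∂μ + ∫⁻ x in A, (1 - g x) ∂μ := by
      rw [splitI1, add_comm (∫⁻ x in A, g x ∂μ), oneminus]
    exact (ENNReal.add_right_inj hgAfin).mp e
  have step1 : c * ∫⁻ x in Aᶜ, g x ∂μ ≤ ∫⁻ x in Aᶜ, h x * g x ∂μ := by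
    rw [← lintegral_const_mul c gmeas]
    refine lintegral_mono_ae ?_
    filter_upwards [ae_restrict_mem hAm.compl] with x hx
    have hx' : ¬ h x < c := hx
    exact mul_le_mul_left (not_lt.mp hx') _
  have step3 : ∫⁻ x in A, h x * (1 - g x) ∂μ ≤ c * ∫⁻ x in A, (1 - g x) ∂μ := by
    rw [← lintegral_const_mul c (by fun_prop : Measurable fun x => 1 - g x)]
    refine lintegral_mono_ae ?_
    filter_upwards [ae_restrict_mem hAm] with x hx
    exact mul_le_mul_left (le_of_lt hx) _
  have step4 : ∫⁻ x in A, h x * g x ∂μ + ∫⁻ x in A, h x * (1 - g x) ∂μ = ∫⁻ x in A, h x ∂μ := by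
    rw [← lintegral_add_left (by fun_prop : Measurable fun x => h x * g x)]
    refine lintegral_congr fun x => ?_
    rw [← mul_add, add_tsub_cancel_of_le (gle1 x), mul_one]
  have key0 : ∫⁻ x in Aᶜ, h x * g x ∂μ = ∫⁻ x in A, h x * (1 - g x) ∂μ :=
    (ENNReal.add_right_inj hT0fin).mp (splitI2.trans step4.symm)
  have le1 : c * ∫⁻ x in A, (1 - g x) ∂μ ≤ ∫⁻ x in A, h x * (1 - g x) ∂μ := by
    rw [← step2eq, ← key0]; exact step1
  have eqB : c * ∫⁻ x in A, (1 - g x) ∂μ = ∫⁻ x in A, h x * (1 - g x) ∂μ :=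
    le_antisymm le1 step3
  have eqC : ∫⁻ x in Aᶜ, h x * g x ∂μ = c * ∫⁻ x in Aᶜ, g x ∂μ := by
    rw [key0, ← eqB, step2eq]
  -- a.e. on Aᶜ, g = 0
  have gAc : ∀ᵐ x ∂μ.restrict Aᶜ, g x = 0 := by
    have haeeq : ∀ᵐ x ∂μ.restrict Aᶜ, c * g x = h x * g x := by
      refine ae_eq_of_ae_le_of_lintegral_ge ((measurable_const.mul gmeas))
        (hmeas.mul gmeas) ?_ hgAcfin ?_
      · filter_upwards [ae_restrict_mem hAm.compl] with x hx
        have hx' : ¬ h x < c := hx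
        exact mul_le_mul_left (not_lt.mp hx') _
      · rw [eqC, lintegral_const_mul c gmeas]
    filter_upwards [haeeq, ae_restrict_mem hAm.compl, ae_restrict_of_ae hatom',
      ae_restrict_of_ae hfinae] with x heq hxA hxc _
    by_contra hgx
    have hclt : c < h x := lt_of_le_of_ne (not_lt.mp hxA) (Ne.symm hxc)
    have hgfin : g x ≠ ∞ := ne_top_of_le_ne_top ENNReal.one_ne_top (gle1 x)
    exact (ENNReal.mul_lt_mul_left hgx hgfin hclt).ne heq
  -- a.e. on A, g = 1
  have gA1 : ∀ᵐ x ∂μ.restrict A, g x = 1 := by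
    have hcgfin : ∫⁻ x in A, c * (1 - g x) ∂μ ≠ ∞ := by
      rw [lintegral_const_mul c (by fun_prop : Measurable fun x => 1 - g x)]
      refine ENNReal.mul_ne_top hcfin (ne_top_of_le_ne_top (measure_ne_top μ A) ?_)
      calc ∫⁻ x in A, (1 - g x) ∂μ ≤ ∫⁻ _ in A, 1 ∂μ := lintegral_mono fun x => tsub_le_self
        _ = μ A := by simp
    have haeeq : ∀ᵐ x ∂μ.restrict A, h x * (1 - g x) = c * (1 - g x) := by
      refine ae_eq_of_ae_le_of_lintegral_ge (hmeas.mul (by fun_prop : Measurable fun x => 1 - g x))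
        (measurable_const.mul (by fun_prop : Measurable fun x => 1 - g x)) ?_ hcgfin ?_
      · filter_upwards [ae_restrict_mem hAm] with x hx
        exact mul_le_mul_left (le_of_lt hx) _
      · rw [lintegral_const_mul c (by fun_prop : Measurable fun x => 1 - g x), eqB]
    filter_upwards [haeeq, ae_restrict_mem hAm] with x heq hxA
    by_contra hgx
    have hsub0 : (1 : ℝ≥0∞) - g x ≠ 0 := by
      rw [Ne, tsub_eq_zero_iff_le]
      exact fun hle'' => hgx (le_antisymm (gle1 x) hle'')
    have hsubfin : (1 : ℝ≥0∞) - g x ≠ ∞ := ne_top_of_le_ne_top ENNReal.one_ne_top tsub_le_self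
    exact (ENNReal.mul_lt_mul_left hsub0 hsubfin hxA).ne heq
  -- A is μ-invariant
  have hAinv : ∀ᵐ x ∂μ, P x A = A.indicator (fun _ => (1 : ℝ≥0∞)) x := by
    have h1 := (ae_restrict_iff' hAm).mp gA1
    have h2 := (ae_restrict_iff' hAm.compl).mp gAc
    filter_upwards [h1, h2] with x hx1 hx2
    by_cases hxA : x ∈ A
    · rw [indicator_of_mem hxA]; exact hx1 hxA
    · rw [indicator_of_notMem hxA]; exact hx2 hxA
  rcases h01 A hAm hAinv with hz | ho
  · exact hμA0 hz
  · exact hμA1 ho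

/-- Let `P` be a transition probability function on a separable metric
space and `μ` an invariant probability measure. Then `μ` is ergodic, i.e. an extreme
point of the convex set of `P`-invariant probability measures, iff every `μ`-invariant
Borel set `A` (meaning `P(·,A) = 1_A` μ-a.e.) has `μ A = 0` or `μ A = 1`. -/
theorem stmt3 {X : Type*} [MetricSpace X] [TopologicalSpace.SeparableSpace X]
    [MeasurableSpace X] [BorelSpace X]
    (P : X → Measure X) (hPprob : ∀ x, IsProbabilityMeasure (P x)) (hPmeas : Measurable P)
    (μ : Measure X) [IsProbabilityMeasure μ] (hinv : μ.bind P = μ) :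
    (∀ (μ₁ μ₂ : Measure X) (t : ℝ≥0), IsProbabilityMeasure μ₁ → μ₁.bind P = μ₁ →
        IsProbabilityMeasure μ₂ → μ₂.bind P = μ₂ → 0 < t → t < 1 →
        μ = (t : ℝ≥0∞) • μ₁ + ((1 - t : ℝ≥0) : ℝ≥0∞) • μ₂ → μ₁ = μ₂) ↔
      (∀ A : Set X, MeasurableSet A →
        (∀ᵐ x ∂μ, P x A = A.indicator (fun _ => (1 : ℝ≥0∞)) x) → μ A = 0 ∨ μ A = 1) := by
  constructor
  · intro hext A hAm hA
    by_contra hcon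
    push_neg at hcon
    obtain ⟨h0, h1⟩ := hcon
    have hAfin : μ A ≠ ∞ := measure_ne_top μ A
    have hAc1 : μ Aᶜ = 1 - μ A := prob_compl_eq_one_sub hAm
    have hAc0 : μ Aᶜ ≠ 0 := by
      rw [hAc1]
      rw [Ne, tsub_eq_zero_iff_le]
      exact not_le.mpr (lt_of_le_of_ne prob_le_one h1)
    have hAcfin : μ Aᶜ ≠ ∞ := measure_ne_top μ Aᶜ
    have hA' : ∀ᵐ x ∂μ, P x Aᶜ = Aᶜ.indicator (fun _ => (1 : ℝ≥0∞)) x := by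
      filter_upwards [hA] with x hx
      haveI := hPprob x
      rw [prob_compl_eq_one_sub hAm, hx]
      by_cases hxA : x ∈ A <;> simp [hxA]
    set μ₁ : Measure X := (μ A)⁻¹ • μ.restrict A with hμ₁
    set μ₂ : Measure X := (μ Aᶜ)⁻¹ • μ.restrict Aᶜ with hμ₂
    have hp₁ : IsProbabilityMeasure μ₁ := ⟨by
      rw [hμ₁, Measure.smul_apply, smul_eq_mul, Measure.restrict_apply_univ]
      exact ENNReal.inv_mul_cancel h0 hAfin⟩
    have hp₂ : IsProbabilityMeasure μ₂ := ⟨by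
      rw [hμ₂, Measure.smul_apply, smul_eq_mul, Measure.restrict_apply_univ]
      exact ENNReal.inv_mul_cancel hAc0 hAcfin⟩
    have bind_smul : ∀ (c : ℝ≥0∞) (ν : Measure X), (c • ν).bind P = c • ν.bind P := by
      intro c ν; ext B hB
      rw [Measure.bind_apply hB hPmeas.aemeasurable, lintegral_smul_measure, Measure.smul_apply, smul_eq_mul,
        Measure.bind_apply hB hPmeas.aemeasurable, smul_eq_mul]
    have hi₁ : μ₁.bind P = μ₁ := by
      rw [hμ₁, bind_smul, bind_restrict_invariant P hPprob hPmeas μ hinv hAm hA]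
    have hi₂ : μ₂.bind P = μ₂ := by
      rw [hμ₂, bind_smul, bind_restrict_invariant P hPprob hPmeas μ hinv hAm.compl hA']
    set t : ℝ≥0 := (μ A).toNNReal with ht
    have htc : (t : ℝ≥0∞) = μ A := ENNReal.coe_toNNReal hAfin
    have hAlt1 : μ A < 1 := lt_of_le_of_ne prob_le_one h1
    have ht0 : 0 < t := by
      rw [pos_iff_ne_zero]
      intro hh
      exact h0 (by rw [← htc, hh, ENNReal.coe_zero])
    have ht1 : t < 1 := by
      have := hAlt1
      rw [← htc] at this
      exact_mod_cast this
    have htc' : ((1 - t : ℝ≥0) : ℝ≥0∞) = μ Aᶜ := by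
      rw [ENNReal.coe_sub, htc, ENNReal.coe_one, hAc1]
    have hdecomp : μ = (t : ℝ≥0∞) • μ₁ + ((1 - t : ℝ≥0) : ℝ≥0∞) • μ₂ := by
      rw [htc, htc', hμ₁, hμ₂, smul_smul, smul_smul,
        ENNReal.mul_inv_cancel h0 hAfin, ENNReal.mul_inv_cancel hAc0 hAcfin,
        one_smul, one_smul, Measure.restrict_add_restrict_compl hAm]
    have heq := hext μ₁ μ₂ t hp₁ hi₁ hp₂ hi₂ ht0 ht1 hdecomp
    have e1 : μ₁ A = 1 := by
      rw [hμ₁, Measure.smul_apply, smul_eq_mul, Measure.restrict_apply hAm, inter_self]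
      exact ENNReal.inv_mul_cancel h0 hAfin
    have e2 : μ₂ A = 0 := by
      rw [hμ₂, Measure.smul_apply, smul_eq_mul, Measure.restrict_apply hAm, inter_compl_self,
        measure_empty, mul_zero]
    rw [heq, e2] at e1
    exact one_ne_zero e1.symm
  · intro h01 μ₁ μ₂ t hp₁ hi₁ hp₂ hi₂ ht0 ht1 hdecomp
    have hac₁ : μ₁ ≪ μ := by
      refine Measure.AbsolutelyContinuous.mk fun s hs h0 => ?_
      have he : μ s = 0 := h0
      rw [hdecomp] at he
      simp only [Measure.add_apply, Measure.smul_apply, smul_eq_mul, add_eq_zero,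
        mul_eq_zero] at he
      rcases he.1 with h | h
      · exact absurd h (ENNReal.coe_ne_zero.mpr ht0.ne')
      · exact h
    have ht1' : (1 - t : ℝ≥0) ≠ 0 := by
      rw [Ne, tsub_eq_zero_iff_le]
      exact not_le.mpr ht1
    have hac₂ : μ₂ ≪ μ := by
      refine Measure.AbsolutelyContinuous.mk fun s hs h0 => ?_
      have he : μ s = 0 := h0
      rw [hdecomp] at he
      simp only [Measure.add_apply, Measure.smul_apply, smul_eq_mul, add_eq_zero,
        mul_eq_zero] at he
      rcases he.2 with h | h
      · exact absurd h (ENNReal.coe_ne_zero.mpr ht1')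
      · exact h
    haveI := hp₁
    haveI := hp₂
    have e₁ : μ₁ = μ := invariant_ac_eq P hPprob hPmeas μ hinv h01 μ₁ hi₁ hac₁
    have e₂ : μ₂ = μ := invariant_ac_eq P hPprob hPmeas μ hinv h01 μ₂ hi₂ hac₂
    rw [e₁, e₂]
end

section
/- Let {X, S_i, p_i}_{i∈I} be a measurable iterated function system with invariant probability measure μ, and let p_x be the Borel probability measures on Σ = I^ℕ determined by p_x(C_{ω^n}) = p_{ω^n}(x). Define the probability measure ν on X × Σ by ν(d(x,ω)) = p_x(dω) μ(dx). Then ν is invariant under the skew product S : (x,ω) ↦ (S_{ω₁}(x), σω), where σ is the left shift on Σ. -/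
open MeasureTheory Set
open scoped ENNReal NNReal

def iterWord {I X : Type*} (S : I → X → X) : List I → X → X
  | [], x => x
  | i :: l, x => iterWord S l (S i x)

def wtWord {I X : Type*} (S : I → X → X) (p : I → X → ℝ) : List I → X → ℝ
  | [], _ => 1
  | i :: l, x => p i x * wtWord S p l (S i x)

def cylinder {I : Type*} (l : List I) : Set (ℕ → I) :=
  {ξ | ∀ (k : ℕ) (h : k < l.length), ξ k = l.get ⟨k, h⟩}

section Aux

variable {I X : Type*}

lemma wtWord_nonneg (S : I → X → X) (p : I → X → ℝ) (hp0 : ∀ i x, 0 ≤ p i x) :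
    ∀ (l : List I) (x : X), 0 ≤ wtWord S p l x
  | [], _ => zero_le_one
  | i :: l, x => mul_nonneg (hp0 i x) (wtWord_nonneg S p hp0 l (S i x))

lemma wtWord_measurable [MeasurableSpace X] (S : I → X → X) (p : I → X → ℝ)
    (hS : ∀ i, Measurable (S i)) (hp : ∀ i, Measurable (p i)) :
    ∀ l : List I, Measurable (wtWord S p l)
  | [] => measurable_const
  | i :: l => (hp i).mul ((wtWord_measurable S p hS hp l).comp (hS i))

lemma cylinder_nil : cylinder ([] : List I) = univ := by
  ext ξ; simp [_root_.cylinder]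

lemma mem_cylinder_cons {i : I} {l : List I} {ω : ℕ → I} :
    ω ∈ cylinder (i :: l) ↔ ω 0 = i ∧ (fun n => ω (n + 1)) ∈ cylinder l := by
  constructor
  · intro h
    refine ⟨h 0 (Nat.succ_pos _), fun k hk => ?_⟩
    exact h (k + 1) (Nat.succ_lt_succ hk)
  · rintro ⟨h0, h⟩ k hk
    cases k with
    | zero => exact h0
    | succ k => exact h k (Nat.lt_of_succ_lt_succ hk)

lemma cylinder_measurableSet [MeasurableSpace I] [MeasurableSingletonClass I]
    (l : List I) : MeasurableSet (cylinder l) := by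
  have : cylinder l = ⋂ (k : Fin l.length), (fun ξ : ℕ → I => ξ k) ⁻¹' {l.get k} := by
    ext ξ
    simp only [_root_.cylinder, mem_setOf_eq, mem_iInter, mem_preimage, mem_singleton_iff]
    exact ⟨fun h k => h k k.2, fun h k hk => h ⟨k, hk⟩⟩
  rw [this]
  exact MeasurableSet.iInter fun k =>
    (measurable_pi_apply _) (measurableSet_singleton _)

lemma eval_preimage_singleton (n : ℕ) (i : I) :
    (fun ξ : ℕ → I => ξ n) ⁻¹' {i} =
      ⋃ (l : List I) (_ : l.length = n), cylinder (l ++ [i]) := by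
  ext ξ
  simp only [mem_preimage, mem_singleton_iff, mem_iUnion]
  constructor
  · intro hξ
    refine ⟨List.ofFn (fun k : Fin n => ξ k), by simp, fun k hk => ?_⟩
    have hlen : (List.ofFn (fun k : Fin n => ξ k)).length = n := by simp
    rcases Nat.lt_succ_iff_lt_or_eq.mp (by simpa [hlen] using hk) with h | h
    · rw [List.get_eq_getElem, List.getElem_append_left (by simpa [hlen] using h)]
      simp
    · subst h
      rw [List.get_eq_getElem, List.getElem_append_right (by simp [hlen])]
      simpa [hlen] using hξ
  · rintro ⟨l, hl, hξ⟩
    have h1 : n < (l ++ [i]).length := by simp [hl]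
    have := hξ n h1
    rw [List.get_eq_getElem, List.getElem_append_right (by simp [hl])] at this
    simpa [hl] using this

lemma generateFrom_cylinder [Countable I] [MeasurableSpace I] [MeasurableSingletonClass I] :
    MeasurableSpace.generateFrom {s : Set (ℕ → I) | ∃ l : List I, s = cylinder l}
      = MeasurableSpace.pi := by
  apply le_antisymm
  · exact MeasurableSpace.generateFrom_le
      (by rintro _ ⟨l, rfl⟩; exact cylinder_measurableSet l)
  · refine iSup_le fun n => ?_
    rintro s ⟨t, -, rfl⟩
    have ht : (fun ξ : ℕ → I => ξ n) ⁻¹' t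
        = ⋃ i ∈ t, (fun ξ : ℕ → I => ξ n) ⁻¹' {i} := by
      ext ξ; simp
    rw [ht]
    refine MeasurableSet.biUnion t.to_countable fun i _ => ?_
    rw [eval_preimage_singleton]
    exact MeasurableSet.iUnion fun l => MeasurableSet.iUnion fun _ =>
      MeasurableSpace.measurableSet_generateFrom ⟨l ++ [i], rfl⟩

lemma cylinder_inter_of_le {l m : List I} (h : l.length ≤ m.length)
    (hne : (cylinder l ∩ cylinder m).Nonempty) :
    cylinder l ∩ cylinder m = cylinder m := by
  obtain ⟨ξ, hξl, hξm⟩ := hne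
  refine Set.inter_eq_self_of_subset_right fun η hη k hk => ?_
  calc η k = m.get ⟨k, lt_of_lt_of_le hk h⟩ := hη k (lt_of_lt_of_le hk h)
    _ = ξ k := (hξm k (lt_of_lt_of_le hk h)).symm
    _ = l.get ⟨k, hk⟩ := hξl k hk

lemma isPiSystem_cylinder :
    IsPiSystem {s : Set (ℕ → I) | ∃ l : List I, s = cylinder l} := by
  rintro _ ⟨l, rfl⟩ _ ⟨m, rfl⟩ hne
  rcases le_total l.length m.length with h | h
  · exact ⟨m, cylinder_inter_of_le h hne⟩
  · refine ⟨l, ?_⟩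
    rw [Set.inter_comm]
    exact cylinder_inter_of_le h (Set.inter_comm _ _ ▸ hne)

lemma key_lintegral [MeasurableSpace X] [Fintype I]
    (S : I → X → X) (hS : ∀ i, Measurable (S i))
    (p : I → X → ℝ) (hp : ∀ i, Measurable (p i))
    (μ : Measure X)
    (hμinv : ∀ A : Set X, MeasurableSet A →
      μ A = ∫⁻ x, ∑ i : I, ENNReal.ofReal (p i x) *
        A.indicator (fun _ => (1 : ℝ≥0∞)) (S i x) ∂μ)
    (f : X → ℝ≥0∞) (hf : Measurable f) :
    ∫⁻ x, f x ∂μ = ∫⁻ x, ∑ i : I, ENNReal.ofReal (p i x) * f (S i x) ∂μ := by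
  revert f
  apply Measurable.ennreal_induction
    (motive := fun f : X → ℝ≥0∞ =>
      ∫⁻ x, f x ∂μ = ∫⁻ x, ∑ i : I, ENNReal.ofReal (p i x) * f (S i x) ∂μ)
  · -- indicator case
    intro c s hs
    have hmeas : Measurable fun x => ∑ i : I, ENNReal.ofReal (p i x) *
        s.indicator (fun _ => (1 : ℝ≥0∞)) (S i x) :=
      Finset.measurable_sum _ fun i _ =>
        ((hp i).ennreal_ofReal).mul ((measurable_const.indicator hs).comp (hS i))
    have hpt : ∀ x, (∑ i : I, ENNReal.ofReal (p i x) *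
        s.indicator (fun _ => c) (S i x))
        = c * ∑ i : I, ENNReal.ofReal (p i x) *
          s.indicator (fun _ => (1 : ℝ≥0∞)) (S i x) := by
      intro x
      rw [Finset.mul_sum]
      refine Finset.sum_congr rfl fun i _ => ?_
      by_cases h : S i x ∈ s
      · simp [Set.indicator_of_mem h, mul_comm, mul_left_comm]
      · simp [Set.indicator_of_notMem h]
    simp only [hpt]
    rw [lintegral_indicator_const hs, lintegral_const_mul c hmeas, ← hμinv s hs]
  · -- add case
    intro f g _ hfm hgm ihf ihg
    simp only [Pi.add_apply]
    have hpt : ∀ x, (∑ i : I, ENNReal.ofReal (p i x) * (f (S i x) + g (S i x)))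
        = (∑ i : I, ENNReal.ofReal (p i x) * f (S i x))
          + ∑ i : I, ENNReal.ofReal (p i x) * g (S i x) := by
      intro x
      simp [mul_add, Finset.sum_add_distrib]
    simp only [hpt]
    have hfm' : Measurable fun x => ∑ i : I, ENNReal.ofReal (p i x) * f (S i x) :=
      Finset.measurable_sum _ fun i _ =>
        ((hp i).ennreal_ofReal).mul (hfm.comp (hS i))
    rw [lintegral_add_left hfm, lintegral_add_left hfm', ihf, ihg]
  · -- sup case
    intro f hfm hmono ih
    have hpt : ∀ x, (∑ i : I, ENNReal.ofReal (p i x) * ⨆ n, f n (S i x))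
        = ⨆ n, ∑ i : I, ENNReal.ofReal (p i x) * f n (S i x) := by
      intro x
      simp_rw [ENNReal.mul_iSup]
      exact ENNReal.finsetSum_iSup_of_monotone fun i a b hab =>
        mul_le_mul_right (hmono hab (S i x)) _
    simp only [hpt]
    rw [lintegral_iSup hfm hmono, lintegral_iSup, ← iSup_congr ih]
    · exact fun n => Finset.measurable_sum _ fun i _ =>
        ((hp i).ennreal_ofReal).mul ((hfm n).comp (hS i))
    · intro a b hab x
      exact Finset.sum_le_sum fun i _ => mul_le_mul_right (hmono hab (S i x)) _

end Aux

/-- For a measurable IFS `{X, S_i, p_i}` with invariant probability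
measure `μ` and the measures `p_x` on `Σ = I^ℕ` determined by `p_x(C_{ω^n}) = p_{ω^n}(x)`,
the measure `ν(d(x,ω)) = p_x(dω) μ(dx)` on `X × Σ` is invariant under the skew product
`S : (x,ω) ↦ (S_{ω₁}(x), σω)`. -/
theorem stmt5 {X I : Type*} [MetricSpace X] [TopologicalSpace.SeparableSpace X]
    [MeasurableSpace X] [BorelSpace X]
    [Fintype I] [MeasurableSpace I] [MeasurableSingletonClass I]
    (hcard : 2 ≤ Fintype.card I)
    (S : I → X → X) (hS : ∀ i, Measurable (S i))
    (p : I → X → ℝ) (hp : ∀ i, Measurable (p i))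
    (hp0 : ∀ i x, 0 ≤ p i x) (hp1 : ∀ x, ∑ i : I, p i x = 1)
    (μ : Measure X) [IsProbabilityMeasure μ]
    (hμinv : ∀ A : Set X, MeasurableSet A →
      μ A = ∫⁻ x, ∑ i : I, ENNReal.ofReal (p i x) *
        A.indicator (fun _ => (1 : ℝ≥0∞)) (S i x) ∂μ)
    (px : X → Measure (ℕ → I)) (hpxprob : ∀ x, IsProbabilityMeasure (px x))
    (hpxmeas : Measurable px)
    (hpxcyl : ∀ (x : X) (l : List I), px x (cylinder l) = ENNReal.ofReal (wtWord S p l x))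
    (ν : Measure (X × (ℕ → I)))
    (hν : ∀ A : Set (X × (ℕ → I)), MeasurableSet A →
      ν A = ∫⁻ x, px x {ω | (x, ω) ∈ A} ∂μ) :
    Measure.map (fun z : X × (ℕ → I) => (S (z.2 0) z.1, fun n => z.2 (n + 1))) ν = ν := by
  classical
  set T : X × (ℕ → I) → X × (ℕ → I) :=
    fun z => (S (z.2 0) z.1, fun n => z.2 (n + 1)) with hTdef
  -- measurability of T
  have h1 : Measurable fun z : X × (ℕ → I) => S (z.2 0) z.1 := by
    intro B hB
    have hset : (fun z : X × (ℕ → I) => S (z.2 0) z.1) ⁻¹' B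
        = ⋃ i : I, ((fun z : X × (ℕ → I) => z.2 0) ⁻¹' {i}) ∩ {z | S i z.1 ∈ B} := by
      ext z
      simp only [mem_preimage, mem_iUnion, mem_inter_iff, mem_setOf_eq, mem_singleton_iff]
      constructor
      · intro h; exact ⟨z.2 0, rfl, h⟩
      · rintro ⟨i, hi, h⟩; rw [hi]; exact h
    rw [hset]
    refine MeasurableSet.iUnion fun i => MeasurableSet.inter ?_ ?_
    · exact ((measurable_pi_apply 0).comp measurable_snd) (measurableSet_singleton i)
    · exact ((hS i).comp measurable_fst) hB
  have h2 : Measurable fun z : X × (ℕ → I) => (fun n => z.2 (n + 1) : ℕ → I) :=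
    measurable_pi_lambda _ fun n => (measurable_pi_apply (n + 1)).comp measurable_snd
  have hTm : Measurable T := h1.prodMk h2
  -- ν is a probability measure
  have hνprob : IsProbabilityMeasure ν := by
    constructor
    rw [hν univ MeasurableSet.univ]
    have : ∀ x : X, px x {ω | (x, ω) ∈ (univ : Set (X × (ℕ → I)))} = 1 := by
      intro x
      have := hpxprob x
      simpa using measure_univ
    simp only [this, lintegral_one, measure_univ]
  haveI := hνprob
  haveI : IsProbabilityMeasure (ν.map T) := Measure.isProbabilityMeasure_map hTm.aemeasurable
  -- generating π-system
  set D : Set (Set (ℕ → I)) := {s | ∃ l : List I, s = cylinder l} with hDdef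
  have hDspan : IsCountablySpanning D := by
    refine ⟨fun _ => cylinder ([] : List I), fun _ => ⟨[], rfl⟩, ?_⟩
    simp [cylinder_nil, Set.iUnion_const]
  have hgen : (Prod.instMeasurableSpace : MeasurableSpace (X × (ℕ → I)))
      = MeasurableSpace.generateFrom
        (image2 (· ×ˢ ·) {A : Set X | MeasurableSet A} D) :=
    (generateFrom_eq_prod MeasurableSpace.generateFrom_measurableSet
      generateFrom_cylinder isCountablySpanning_measurableSet hDspan).symm
  refine ext_of_generate_finite _ hgen
    (IsPiSystem.prod MeasurableSpace.isPiSystem_measurableSet isPiSystem_cylinder) ?_ (by simp [measure_univ])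
  rintro s ⟨A, hA, _, ⟨l, rfl⟩, rfl⟩
  have hAcyl : MeasurableSet (A ×ˢ cylinder l) := hA.prod (cylinder_measurableSet l)
  -- the key function
  set f : X → ℝ≥0∞ :=
    fun y => A.indicator (fun _ => (1 : ℝ≥0∞)) y * ENNReal.ofReal (wtWord S p l y) with hfdef
  have hfm : Measurable f :=
    (measurable_const.indicator hA).mul
      ((wtWord_measurable S p hS hp l).ennreal_ofReal)
  -- RHS
  have hRHS : ν (A ×ˢ cylinder l) = ∫⁻ x, f x ∂μ := by
    rw [hν _ hAcyl]
    refine lintegral_congr fun x => ?_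
    by_cases hx : x ∈ A
    · have : {ω | (x, ω) ∈ A ×ˢ cylinder l} = cylinder l := by
        ext ω; simp [Set.mem_prod, hx]
      rw [this, hpxcyl]
      simp [hfdef, Set.indicator_of_mem hx]
    · have : {ω | (x, ω) ∈ A ×ˢ cylinder l} = ∅ := by
        ext ω; simp [Set.mem_prod, hx]
      rw [this]
      simp [hfdef, Set.indicator_of_notMem hx]
  -- LHS
  rw [Measure.map_apply hTm hAcyl, hν _ (hTm hAcyl), hRHS]
  rw [key_lintegral S hS p hp μ hμinv f hfm]
  refine lintegral_congr fun x => ?_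
  have hset : {ω | (x, ω) ∈ T ⁻¹' (A ×ˢ cylinder l)}
      = ⋃ i ∈ Finset.univ.filter (fun i : I => S i x ∈ A), cylinder (i :: l) := by
    ext ω
    simp only [mem_setOf_eq, mem_preimage, Set.mem_prod, hTdef, Finset.mem_filter,
      Finset.mem_univ, true_and, mem_iUnion, mem_cylinder_cons, exists_prop]
    constructor
    · rintro ⟨ha, hc⟩; exact ⟨ω 0, ha, rfl, hc⟩
    · rintro ⟨i, hi, h0, hc⟩; rw [h0]; exact ⟨hi, hc⟩
  rw [hset, measure_biUnion_finset ?_ fun i _ => cylinder_measurableSet _]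
  · rw [Finset.sum_filter]
    refine Finset.sum_congr rfl fun i _ => ?_
    by_cases h : S i x ∈ A
    · rw [if_pos h, hpxcyl]
      show ENNReal.ofReal (p i x * wtWord S p l (S i x)) = _
      rw [ENNReal.ofReal_mul (hp0 i x)]
      simp [hfdef, Set.indicator_of_mem h]
    · rw [if_neg h]
      simp [hfdef, Set.indicator_of_notMem h]
  · -- pairwise disjoint
    intro i _ j _ hij
    refine Set.disjoint_left.mpr fun ω hωi hωj => ?_
    exact hij ((mem_cylinder_cons.mp hωi).1.symm.trans (mem_cylinder_cons.mp hωj).1)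
end

section
/- Let {X, S_i, p_i} be a measurable iterated function system on a separable metric space with invariant probability measure μ, and let ν(d(x,ω)) = p_x(dω)μ(dx) be the associated measure on X × Σ. Then μ is ergodic for the iterated function system if and only if ν is ergodic for the skew product S(x,ω) = (S_{ω₁}(x), σω). -/
open MeasureTheory Set
open scoped ENNReal NNReal

/-- The Markov operator kernel of the IFS: `P(x,·) = Σ_i p_i(x) δ_{S_i(x)}`. -/
noncomputable def ifsKernel {I X : Type*} [Fintype I] [MeasurableSpace X]
    (S : I → X → X) (p : I → X → ℝ) (x : X) : Measure X :=
  ∑ i : I, ENNReal.ofReal (p i x) • Measure.dirac (S i x)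

open ProbabilityTheory

namespace S8
variable {I : Type*}

/-- the shift on sequences -/
def shf : (ℕ → I) → ℕ → I := fun ω n => ω (n + 1)

lemma measurable_shf [MeasurableSpace I] : Measurable (shf (I := I)) :=
  measurable_pi_lambda _ fun n => measurable_pi_apply (n + 1)

lemma _root_.cylinder_nil_s8 : _root_.cylinder ([] : List I) = univ := by
  ext ω; simp [_root_.cylinder]

lemma mem_cylinder_cons {i : I} {l : List I} {ω : ℕ → I} :
    ω ∈ _root_.cylinder (i :: l) ↔ ω 0 = i ∧ shf ω ∈ _root_.cylinder l := by
  constructor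
  · intro h
    refine ⟨h 0 (by simp), fun k hk => ?_⟩
    have := h (k + 1) (by simpa using Nat.succ_lt_succ hk)
    simpa [shf] using this
  · rintro ⟨h0, h1⟩ k hk
    cases k with
    | zero => simpa using h0
    | succ n =>
      have hn : n < l.length := by simpa using Nat.lt_of_succ_lt_succ hk
      simpa [shf] using h1 n hn

lemma _root_.cylinder_cons (i : I) (l : List I) :
    _root_.cylinder (i :: l) = {ω : ℕ → I | ω 0 = i} ∩ shf ⁻¹' (_root_.cylinder l) := by
  ext ω; simpa [Set.mem_inter_iff] using mem_cylinder_cons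

lemma _root_.cylinder_singleton (i : I) : _root_.cylinder [i] = {ω : ℕ → I | ω 0 = i} := by
  rw [_root_.cylinder_cons, _root_.cylinder_nil_s8]; simp

lemma measurableSet_cylinder [MeasurableSpace I] [MeasurableSingletonClass I] (l : List I) :
    MeasurableSet (_root_.cylinder l) := by
  have : _root_.cylinder l = ⋂ (k : Fin l.length), (fun ω : ℕ → I => ω k) ⁻¹' {l.get k} := by
    ext ω
    simp only [Set.mem_iInter, Set.mem_preimage, Set.mem_singleton_iff]
    exact ⟨fun h k => h k k.2, fun h k hk => h ⟨k, hk⟩⟩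
  rw [this]
  exact MeasurableSet.iInter fun k => (measurable_pi_apply _) (measurableSet_singleton _)

lemma isPiSystem_cylinders : IsPiSystem {s : Set (ℕ → I) | ∃ l : List I, s = _root_.cylinder l} := by
  rintro s ⟨l₁, rfl⟩ t ⟨l₂, rfl⟩ hne
  obtain ⟨ω, hω₁, hω₂⟩ := hne
  rcases le_total l₁.length l₂.length with h | h
  · refine ⟨l₂, ?_⟩
    refine subset_antisymm inter_subset_right fun ξ hξ => ⟨fun k hk => ?_, hξ⟩
    have h1 := hω₁ k hk
    have h2 := hω₂ k (lt_of_lt_of_le hk h)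
    have h3 := hξ k (lt_of_lt_of_le hk h)
    rw [h3, ← h2, h1]
  · refine ⟨l₁, ?_⟩
    refine subset_antisymm inter_subset_left fun ξ hξ => ⟨hξ, fun k hk => ?_⟩
    have h1 := hω₂ k hk
    have h2 := hω₁ k (lt_of_lt_of_le hk h)
    have h3 := hξ k (lt_of_lt_of_le hk h)
    rw [h3, ← h2, h1]

lemma generateFrom_cylinders [MeasurableSpace I] [MeasurableSingletonClass I] [Fintype I] :
    MeasurableSpace.generateFrom {s : Set (ℕ → I) | ∃ l : List I, s = _root_.cylinder l}
      = (inferInstance : MeasurableSpace (ℕ → I)) := by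
  apply le_antisymm
  · exact MeasurableSpace.generateFrom_le (by rintro s ⟨l, rfl⟩; exact measurableSet_cylinder l)
  · set G := MeasurableSpace.generateFrom {s : Set (ℕ → I) | ∃ l : List I, s = _root_.cylinder l} with hG
    have key : ∀ (k : ℕ) (i : I), MeasurableSet[G] {ω : ℕ → I | ω k = i} := by
      intro k i
      have hset : {ω : ℕ → I | ω k = i}
          = ⋃ (w : List I) (_ : w.length = k), _root_.cylinder (w ++ [i]) := by
        ext ω
        simp only [Set.mem_setOf_eq, Set.mem_iUnion]
        constructor
        · intro h
          refine ⟨List.ofFn (fun j : Fin k => ω j), by simp, fun m hm => ?_⟩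
          have hlen : (List.ofFn (fun j : Fin k => ω j)).length = k := by simp
          rcases lt_or_ge m k with hmk | hmk
          · have hml : m < (List.ofFn (fun j : Fin k => ω j)).length := by simpa using hmk
            have : (List.ofFn (fun j : Fin k => ω j) ++ [i]).get ⟨m, hm⟩
                = (List.ofFn (fun j : Fin k => ω j)).get ⟨m, hml⟩ := by
              simpa using List.getElem_append_left (bs := [i]) hml
            rw [this]
            simp
          · have hmek : m = k := by
              have : m < k + 1 := by simpa [hlen] using hm
              omega
            subst hmek
            have : (List.ofFn (fun j : Fin m => ω j) ++ [i]).get ⟨m, hm⟩ = i := by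
              simpa using List.getElem_concat_length
                (List.ofFn (fun j : Fin m => ω j)) i m (by simp) (by simp)
            rw [this, h]
        · rintro ⟨w, hw, hmem⟩
          have hm : w.length < (w ++ [i]).length := by simp
          have := hmem w.length hm
          have hgi : (w ++ [i]).get ⟨w.length, hm⟩ = i := by
            simpa using List.getElem_concat_length w i w.length rfl (by simp)
          rw [hgi] at this
          rw [← hw]; exact this
      rw [hset]
      exact .iUnion fun w => .iUnion fun _ => .basic _ ⟨_, rfl⟩
    rw [MeasurableSpace.pi]
    refine iSup_le fun k => ?_
    intro s hs
    obtain ⟨t, ht, rfl⟩ := hs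
    have : (fun ω : ℕ → I => ω k) ⁻¹' t = ⋃ i ∈ t, {ω : ℕ → I | ω k = i} := by
      ext ω; simp
    rw [this]
    exact MeasurableSet.biUnion t.to_countable fun i _ => key k i

section
variable {X : Type*} [MeasurableSpace X] [Fintype I] [MeasurableSpace I]
  [MeasurableSingletonClass I]
variable {S : I → X → X} {p : I → X → ℝ}

lemma wtWord_nonneg (hp0 : ∀ i x, 0 ≤ p i x) : ∀ (l : List I) (x : X), 0 ≤ wtWord S p l x
  | [], _ => by simp [wtWord]
  | i :: l, x => by
      show (0:ℝ) ≤ p i x * wtWord S p l (S i x)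
      exact mul_nonneg (hp0 i x) (wtWord_nonneg hp0 l (S i x))

lemma measurable_iterWord (hS : ∀ i, Measurable (S i)) :
    ∀ l : List I, Measurable (iterWord S l)
  | [] => measurable_id
  | i :: l => (measurable_iterWord hS l).comp (hS i)

lemma measurable_wtWord (hS : ∀ i, Measurable (S i)) (hp : ∀ i, Measurable (p i)) :
    ∀ l : List I, Measurable (wtWord S p l)
  | [] => measurable_const
  | i :: l => (hp i).mul ((measurable_wtWord hS hp l).comp (hS i))

lemma measurableSet_omega0 (i : I) : MeasurableSet {ω : ℕ → I | ω 0 = i} := by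
  have : {ω : ℕ → I | ω 0 = i} = (fun ω : ℕ → I => ω 0) ⁻¹' {i} := rfl
  rw [this]
  exact (measurable_pi_apply 0) (measurableSet_singleton i)

variable {px : X → Measure (ℕ → I)}

lemma markov (hp0 : ∀ i x, 0 ≤ p i x)
    (hpxprob : ∀ x, IsProbabilityMeasure (px x))
    (hpxcyl : ∀ (x : X) (l : List I),
      px x (_root_.cylinder l) = ENNReal.ofReal (wtWord S p l x))
    (x : X) (i : I) {E : Set (ℕ → I)} (hE : MeasurableSet E) :
    px x {ω | ω 0 = i ∧ shf ω ∈ E} = ENNReal.ofReal (p i x) * px (S i x) E := by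
  haveI := hpxprob x
  haveI := hpxprob (S i x)
  set m1 : Measure (ℕ → I) := ((px x).restrict {ω : ℕ → I | ω 0 = i}).map shf with hm1
  set m2 : Measure (ℕ → I) := ENNReal.ofReal (p i x) • px (S i x) with hm2
  have hm1ap : ∀ {F : Set (ℕ → I)}, MeasurableSet F →
      m1 F = px x (shf ⁻¹' F ∩ {ω : ℕ → I | ω 0 = i}) := by
    intro F hF
    rw [hm1, Measure.map_apply measurable_shf hF,
      Measure.restrict_apply (measurable_shf hF)]
  have key : m1 = m2 := by
    refine ext_of_generate_finite _ generateFrom_cylinders.symm isPiSystem_cylinders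
      ?_ ?_
    · rintro s ⟨l, rfl⟩
      rw [hm1ap (measurableSet_cylinder l)]
      have hset : shf ⁻¹' _root_.cylinder l ∩ {ω : ℕ → I | ω 0 = i}
          = _root_.cylinder (i :: l) := by
        rw [cylinder_cons]; exact (inter_comm _ _)
      rw [hset, hpxcyl, hm2, Measure.smul_apply, smul_eq_mul, hpxcyl]
      show ENNReal.ofReal (p i x * wtWord S p l (S i x)) = _
      rw [ENNReal.ofReal_mul (hp0 i x)]
    · rw [hm1ap MeasurableSet.univ]
      have : shf ⁻¹' (univ : Set (ℕ → I)) ∩ {ω : ℕ → I | ω 0 = i}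
          = _root_.cylinder [i] := by
        rw [cylinder_singleton]; simp
      rw [this, hpxcyl, hm2, Measure.smul_apply, smul_eq_mul, measure_univ, mul_one]
      simp [wtWord]
  have hset2 : {ω : ℕ → I | ω 0 = i ∧ shf ω ∈ E}
      = shf ⁻¹' E ∩ {ω : ℕ → I | ω 0 = i} := by
    ext ω; simp [and_comm]
  rw [hset2, ← hm1ap hE, key, hm2, Measure.smul_apply, smul_eq_mul]

end

section
variable {X : Type*} [MeasurableSpace X] [Fintype I] [MeasurableSpace I]
  [MeasurableSingletonClass I]
variable (S : I → X → X) (p : I → X → ℝ)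

/-- the skew product map -/
def Tsk : X × (ℕ → I) → X × (ℕ → I) := fun z => (S (z.2 0) z.1, shf z.2)

lemma measurable_Tsk (hS : ∀ i, Measurable (S i)) : Measurable (Tsk S) := by
  have h1 : Measurable fun q : X × I => S q.2 q.1 :=
    measurable_from_prod_countable_left fun i => hS i
  have h2 : Measurable fun z : X × (ℕ → I) => S (z.2 0) z.1 :=
    h1.comp (measurable_fst.prodMk ((measurable_pi_apply 0).comp measurable_snd))
  exact h2.prodMk (measurable_shf.comp measurable_snd)

variable {S p}

lemma measurable_ifsKernel (hS : ∀ i, Measurable (S i)) (hp : ∀ i, Measurable (p i)) :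
    Measurable (ifsKernel S p) := by
  apply Measure.measurable_of_measurable_coe
  intro s hs
  have : (fun x => ifsKernel S p x s)
      = fun x => ∑ i : I, ENNReal.ofReal (p i x) * (S i ⁻¹' s).indicator 1 x := by
    funext x
    rw [ifsKernel, Measure.finset_sum_apply]
    refine Finset.sum_congr rfl fun i _ => ?_
    rw [Measure.smul_apply, smul_eq_mul, Measure.dirac_apply' _ hs]
    rfl
  rw [this]
  exact Finset.measurable_sum _ fun i _ =>
    ((hp i).ennreal_ofReal).mul ((measurable_const.indicator (hS i hs)))

lemma lintegral_ifsKernel {h : X → ℝ≥0∞} (hh : Measurable h) (x : X) :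
    ∫⁻ y, h y ∂(ifsKernel S p x) = ∑ i : I, ENNReal.ofReal (p i x) * h (S i x) := by
  rw [ifsKernel, lintegral_finset_sum_measure]
  refine Finset.sum_congr rfl fun i _ => ?_
  rw [lintegral_smul_measure, lintegral_dirac' _ hh, smul_eq_mul]

/-- key transfer identity: integrating the one-step average against an invariant measure. -/
lemma lintegral_inv {m : Measure X} (hS : ∀ i, Measurable (S i)) (hp : ∀ i, Measurable (p i))
    (hm : m.bind (ifsKernel S p) = m) {h : X → ℝ≥0∞} (hh : Measurable h) :
    ∫⁻ x, ∑ i : I, ENNReal.ofReal (p i x) * h (S i x) ∂m = ∫⁻ x, h x ∂m := by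
  conv_rhs => rw [← hm]
  rw [Measure.lintegral_bind (measurable_ifsKernel hS hp).aemeasurable hh.aemeasurable]
  exact lintegral_congr fun x => (lintegral_ifsKernel hh x).symm

variable {px : X → Measure (ℕ → I)}

/-- splitting a measure on sequence space according to the first letter -/
lemma split0 (hpx : ∀ x, IsProbabilityMeasure (px x)) (x : X) {E : Set (ℕ → I)}
    (hE : MeasurableSet E) :
    px x E = ∑ i : I, px x ({ω : ℕ → I | ω 0 = i} ∩ E) := by
  have hU : E = ⋃ i : I, ({ω : ℕ → I | ω 0 = i} ∩ E) := by
    ext ω; simp only [Set.mem_iUnion, Set.mem_inter_iff, Set.mem_setOf_eq]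
    exact ⟨fun h => ⟨ω 0, rfl, h⟩, fun ⟨i, _, h⟩ => h⟩
  conv_lhs => rw [hU]
  rw [measure_iUnion ?_ fun i => (measurableSet_omega0 i).inter hE, tsum_fintype]
  intro i j hij
  simp only [Function.onFun, Set.disjoint_left]
  rintro ω ⟨h1, -⟩ ⟨h2, -⟩
  exact hij (h1.symm.trans h2)


open ProbabilityTheory in
/-- the transition probabilities as a kernel -/
noncomputable def pker (hpxmeas : Measurable px) : Kernel X (ℕ → I) :=
  ⟨px, hpxmeas⟩

@[simp] lemma pker_apply (hpxmeas : Measurable px) (x : X) : pker hpxmeas x = px x := rfl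

theorem pker_markov (hpxmeas : Measurable px) (hpx : ∀ x, IsProbabilityMeasure (px x)) :
    ProbabilityTheory.IsMarkovKernel (pker hpxmeas) := ⟨hpx⟩

/-- iterated Markov property on the fibers of a strictly invariant set. -/
lemma cylFib (hp0 : ∀ i x, 0 ≤ p i x)
    (hpxprob : ∀ x, IsProbabilityMeasure (px x))
    (hpxcyl : ∀ (x : X) (l : List I),
      px x (_root_.cylinder l) = ENNReal.ofReal (wtWord S p l x))
    {A : Set (X × (ℕ → I))} (hA : MeasurableSet A) (hTA : Tsk S ⁻¹' A = A) :
    ∀ (l : List I) (x : X),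
      px x (_root_.cylinder l ∩ {ω | (x, ω) ∈ A})
        = ENNReal.ofReal (wtWord S p l x)
          * px (iterWord S l x) {ω | (iterWord S l x, ω) ∈ A} := by
  intro l
  induction l with
  | nil =>
    intro x
    rw [cylinder_nil_s8, Set.univ_inter]
    show _ = ENNReal.ofReal (1 : ℝ) * _
    rw [ENNReal.ofReal_one, one_mul]
    rfl
  | cons i l ih =>
    intro x
    have hfib : ∀ y : X, MeasurableSet {ω : ℕ → I | (y, ω) ∈ A} :=
      fun y => measurable_prodMk_left hA
    have hset : _root_.cylinder (i :: l) ∩ {ω : ℕ → I | (x, ω) ∈ A}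
        = {ω : ℕ → I | ω 0 = i
            ∧ shf ω ∈ _root_.cylinder l ∩ {ω' : ℕ → I | (S i x, ω') ∈ A}} := by
      ext ω
      simp only [Set.mem_inter_iff, Set.mem_setOf_eq]
      constructor
      · rintro ⟨hc, hω⟩
        obtain ⟨h0, hsh⟩ := mem_cylinder_cons.1 hc
        refine ⟨h0, hsh, ?_⟩
        have : (x, ω) ∈ Tsk S ⁻¹' A := by rw [hTA]; exact hω
        simpa [Tsk, h0] using this
      · rintro ⟨h0, hsh, hω⟩
        refine ⟨mem_cylinder_cons.2 ⟨h0, hsh⟩, ?_⟩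
        rw [← hTA]
        show (S (ω 0) x, shf ω) ∈ A
        rw [h0]; exact hω
    rw [hset,
      markov hp0 hpxprob hpxcyl x i ((measurableSet_cylinder l).inter (hfib (S i x))),
      ih (S i x)]
    show _ = ENNReal.ofReal (p i x * wtWord S p l (S i x)) * _
    rw [ENNReal.ofReal_mul (hp0 i x), mul_assoc]
    rfl

/-- the fiber mass of an invariant set is a harmonic function, pointwise. -/
lemma fib_harmonic (hp0 : ∀ i x, 0 ≤ p i x)
    (hpxprob : ∀ x, IsProbabilityMeasure (px x))
    (hpxcyl : ∀ (x : X) (l : List I),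
      px x (_root_.cylinder l) = ENNReal.ofReal (wtWord S p l x))
    {A : Set (X × (ℕ → I))} (hA : MeasurableSet A) (hTA : Tsk S ⁻¹' A = A) (x : X) :
    px x {ω | (x, ω) ∈ A}
      = ∑ i : I, ENNReal.ofReal (p i x) * px (S i x) {ω | (S i x, ω) ∈ A} := by
  have hfib : MeasurableSet {ω : ℕ → I | (x, ω) ∈ A} := measurable_prodMk_left hA
  rw [split0 hpxprob x hfib]
  refine Finset.sum_congr rfl fun i _ => ?_
  have h1 : {ω : ℕ → I | ω 0 = i} ∩ {ω : ℕ → I | (x, ω) ∈ A}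
      = _root_.cylinder [i] ∩ {ω : ℕ → I | (x, ω) ∈ A} := by
    rw [cylinder_singleton]
  have h2 := cylFib hp0 hpxprob hpxcyl hA hTA (i :: List.nil) x
  rw [h1, h2]
  show ENNReal.ofReal (p i x * wtWord S p List.nil (S i x)) * _ = _
  simp [wtWord, iterWord]

/-- two finite measures on `X × (ℕ → I)` agreeing on measurable rectangles with cylinder
base are equal. -/
lemma prodCylExt {ρ₁ ρ₂ : Measure (X × (ℕ → I))} [IsFiniteMeasure ρ₁] [IsFiniteMeasure ρ₂]
    (h : ∀ B : Set X, MeasurableSet B → ∀ l : List I,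
      ρ₁ (B ×ˢ _root_.cylinder l) = ρ₂ (B ×ˢ _root_.cylinder l)) : ρ₁ = ρ₂ := by
  have hgen : (inferInstance : MeasurableSpace (X × (ℕ → I)))
      = MeasurableSpace.generateFrom
        (image2 (· ×ˢ ·) {s : Set X | MeasurableSet s}
          {s : Set (ℕ → I) | ∃ l : List I, s = _root_.cylinder l}) := by
    conv_lhs => rw [show (inferInstance : MeasurableSpace (X × (ℕ → I)))
      = @Prod.instMeasurableSpace X (ℕ → I)
        (MeasurableSpace.generateFrom {s : Set X | MeasurableSet s})
        (MeasurableSpace.generateFrom {s : Set (ℕ → I) | ∃ l : List I, s = _root_.cylinder l})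
      from by rw [MeasurableSpace.generateFrom_measurableSet, generateFrom_cylinders]]
    exact generateFrom_prod_eq isCountablySpanning_measurableSet
      ⟨fun _ => _root_.cylinder [], fun _ => ⟨[], rfl⟩, by simp only [cylinder_nil_s8, Set.iUnion_const]⟩
  refine ext_of_generate_finite _ hgen
    (IsPiSystem.prod MeasurableSpace.isPiSystem_measurableSet isPiSystem_cylinders) ?_ ?_
  · rintro s ⟨B, hB, t, ⟨l, rfl⟩, rfl⟩
    exact h B hB l
  · have := h univ MeasurableSet.univ List.nil
    simpa [cylinder_nil_s8] using this


open ProbabilityTheory in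
/-- the skew product preserves `m ⊗ₘ pker` for every invariant measure `m`. -/
lemma measurePreserving_Tsk (hS : ∀ i, Measurable (S i)) (hp : ∀ i, Measurable (p i))
    (hp0 : ∀ i x, 0 ≤ p i x)
    (hpxprob : ∀ x, IsProbabilityMeasure (px x)) (hpxmeas : Measurable px)
    (hpxcyl : ∀ (x : X) (l : List I),
      px x (_root_.cylinder l) = ENNReal.ofReal (wtWord S p l x))
    {m : Measure X} [IsProbabilityMeasure m] (hm : m.bind (ifsKernel S p) = m) :
    MeasurePreserving (Tsk S) (m ⊗ₘ pker hpxmeas) (m ⊗ₘ pker hpxmeas) := by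
  haveI := pker_markov hpxmeas hpxprob
  refine ⟨measurable_Tsk S hS, ?_⟩
  haveI : IsProbabilityMeasure (Measure.map (Tsk S) (m ⊗ₘ pker hpxmeas)) :=
    Measure.isProbabilityMeasure_map (measurable_Tsk S hS).aemeasurable
  refine prodCylExt fun B hB l => ?_
  have hcylm := measurableSet_cylinder (I := I) l
  have hrect : MeasurableSet (B ×ˢ _root_.cylinder l) := hB.prod hcylm
  rw [Measure.map_apply (measurable_Tsk S hS) hrect,
    Measure.compProd_apply ((measurable_Tsk S hS) hrect), Measure.compProd_apply hrect]
  set h : X → ℝ≥0∞ := B.indicator (fun y => px y (_root_.cylinder l)) with hh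
  have hmeas_h : Measurable h :=
    ((Measure.measurable_coe hcylm).comp hpxmeas).indicator hB
  have hR : ∀ x : X, (pker hpxmeas) x (Prod.mk x ⁻¹' (B ×ˢ _root_.cylinder l)) = h x := by
    intro x
    by_cases hxB : x ∈ B
    · have : Prod.mk x ⁻¹' (B ×ˢ _root_.cylinder l) = _root_.cylinder l := by
        ext ω; simp [hxB]
      rw [pker_apply, this, hh, Set.indicator_of_mem hxB]
    · have : Prod.mk x ⁻¹' (B ×ˢ _root_.cylinder l) = (∅ : Set (ℕ → I)) := by
        ext ω; simp [hxB]
      rw [pker_apply, this, measure_empty, hh, Set.indicator_of_notMem hxB]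
  have hL : ∀ x : X, (pker hpxmeas) x (Prod.mk x ⁻¹' (Tsk S ⁻¹' (B ×ˢ _root_.cylinder l)))
      = ∑ i : I, ENNReal.ofReal (p i x) * h (S i x) := by
    intro x
    have hfib : Prod.mk x ⁻¹' (Tsk S ⁻¹' (B ×ˢ _root_.cylinder l))
        = {ω : ℕ → I | S (ω 0) x ∈ B ∧ shf ω ∈ _root_.cylinder l} := by
      ext ω; simp [Tsk]
    rw [pker_apply, hfib]
    have hfibm : MeasurableSet {ω : ℕ → I | S (ω 0) x ∈ B ∧ shf ω ∈ _root_.cylinder l} := by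
      have : {ω : ℕ → I | S (ω 0) x ∈ B ∧ shf ω ∈ _root_.cylinder l}
          = ((fun ω : ℕ → I => ω 0) ⁻¹' ((fun i => S i x) ⁻¹' B)) ∩ shf ⁻¹' _root_.cylinder l := by
        ext ω; simp
      rw [this]
      refine MeasurableSet.inter ?_ (measurable_shf hcylm)
      exact (measurable_pi_apply 0) (measurable_of_countable (fun i : I => S i x) hB)
    rw [split0 hpxprob x hfibm]
    refine Finset.sum_congr rfl fun i _ => ?_
    by_cases hSiB : S i x ∈ B
    · have : {ω : ℕ → I | ω 0 = i} ∩ {ω : ℕ → I | S (ω 0) x ∈ B ∧ shf ω ∈ _root_.cylinder l}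
          = {ω : ℕ → I | ω 0 = i ∧ shf ω ∈ _root_.cylinder l} := by
        ext ω
        simp only [Set.mem_inter_iff, Set.mem_setOf_eq]
        constructor
        · rintro ⟨h0, -, h2⟩; exact ⟨h0, h2⟩
        · rintro ⟨h0, h2⟩; refine ⟨h0, ?_, h2⟩; rw [h0]; exact hSiB
      rw [this, markov hp0 hpxprob hpxcyl x i hcylm, hh, Set.indicator_of_mem hSiB]
    · have : {ω : ℕ → I | ω 0 = i} ∩ {ω : ℕ → I | S (ω 0) x ∈ B ∧ shf ω ∈ _root_.cylinder l}
          = (∅ : Set (ℕ → I)) := by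
        ext ω
        simp only [Set.mem_inter_iff, Set.mem_setOf_eq, Set.mem_empty_iff_false, iff_false,
          not_and]
        rintro h0 h1 h2
        rw [h0] at h1
        exact absurd h1 hSiB
      rw [this, measure_empty, hh, Set.indicator_of_notMem hSiB, mul_zero]
  calc ∫⁻ x, (pker hpxmeas) x (Prod.mk x ⁻¹' (Tsk S ⁻¹' (B ×ˢ _root_.cylinder l))) ∂m
      = ∫⁻ x, ∑ i : I, ENNReal.ofReal (p i x) * h (S i x) ∂m := lintegral_congr hL
    _ = ∫⁻ x, h x ∂m := lintegral_inv hS hp hm hmeas_h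
    _ = ∫⁻ x, (pker hpxmeas) x (Prod.mk x ⁻¹' (B ×ˢ _root_.cylinder l)) ∂m :=
        (lintegral_congr hR).symm


lemma ifsKernel_apply {B : Set X} (hB : MeasurableSet B) (x : X) :
    ifsKernel S p x B = ∑ i : I, ENNReal.ofReal (p i x) * B.indicator 1 (S i x) := by
  rw [ifsKernel, Measure.finset_sum_apply]
  refine Finset.sum_congr rfl fun i _ => ?_
  rw [Measure.smul_apply, smul_eq_mul, Measure.dirac_apply' _ hB]

lemma integrable_of_bdd {m : Measure X} [IsProbabilityMeasure m] {g : X → ℝ} {C : ℝ}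
    (hg : Measurable g) (hb : ∀ x, |g x| ≤ C) : Integrable g m :=
  (integrable_const C).mono' hg.aestronglyMeasurable (Filter.Eventually.of_forall hb)

/-- the transfer identity for real integrals of bounded nonnegative functions. -/
lemma integral_inv (hS : ∀ i, Measurable (S i)) (hp : ∀ i, Measurable (p i))
    (hp0 : ∀ i x, 0 ≤ p i x) (hp1 : ∀ x, ∑ i : I, p i x = 1)
    {m : Measure X} (hm : m.bind (ifsKernel S p) = m)
    {g : X → ℝ} (hg : Measurable g) (hg0 : ∀ x, 0 ≤ g x) :
    ∫ x, (∑ i : I, p i x * g (S i x)) ∂m = ∫ x, g x ∂m := by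
  have hGmeas : Measurable fun x => ∑ i : I, p i x * g (S i x) :=
    Finset.measurable_sum _ fun i _ => (hp i).mul (hg.comp (hS i))
  have hG0 : ∀ x, 0 ≤ ∑ i : I, p i x * g (S i x) := fun x =>
    Finset.sum_nonneg fun i _ => mul_nonneg (hp0 i x) (hg0 (S i x))
  rw [integral_eq_lintegral_of_nonneg_ae (Filter.Eventually.of_forall hG0)
      hGmeas.aestronglyMeasurable,
    integral_eq_lintegral_of_nonneg_ae (Filter.Eventually.of_forall hg0)
      hg.aestronglyMeasurable]
  congr 1
  have hpt : ∀ x, ENNReal.ofReal (∑ i : I, p i x * g (S i x))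
      = ∑ i : I, ENNReal.ofReal (p i x) * ENNReal.ofReal (g (S i x)) := by
    intro x
    rw [ENNReal.ofReal_sum_of_nonneg fun i _ => mul_nonneg (hp0 i x) (hg0 (S i x))]
    exact Finset.sum_congr rfl fun i _ => ENNReal.ofReal_mul (hp0 i x)
  rw [lintegral_congr hpt]
  exact lintegral_inv hS hp hm hg.ennreal_ofReal

/-- a.e. along the chain, a bounded harmonic function is locally constant. -/
lemma harmonic_loc_const (hS : ∀ i, Measurable (S i)) (hp : ∀ i, Measurable (p i))
    (hp0 : ∀ i x, 0 ≤ p i x) (hp1 : ∀ x, ∑ i : I, p i x = 1)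
    {m : Measure X} [IsProbabilityMeasure m] (hm : m.bind (ifsKernel S p) = m)
    {q : X → ℝ≥0∞} (hq : Measurable q) (hq1 : ∀ x, q x ≤ 1)
    (hharm : ∀ x, q x = ∑ i : I, ENNReal.ofReal (p i x) * q (S i x)) :
    ∀ᵐ x ∂m, ∀ i : I, p i x ≠ 0 → q (S i x) = q x := by
  have hq_ne_top : ∀ x, q x ≠ ⊤ := fun x => ((hq1 x).trans_lt (by norm_num)).ne
  set g : X → ℝ := fun x => (q x).toReal with hgdef
  have hgmeas : Measurable g := hq.ennreal_toReal
  have hg0 : ∀ x, 0 ≤ g x := fun x => ENNReal.toReal_nonneg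
  have hg1 : ∀ x, g x ≤ 1 := by
    intro x
    have := ENNReal.toReal_mono (by norm_num) (hq1 x)
    simpa using this
  have hgb : ∀ x, |g x| ≤ 1 := fun x => abs_le.2 ⟨by linarith [hg0 x], hg1 x⟩
  have hg_harm : ∀ x, g x = ∑ i : I, p i x * g (S i x) := by
    intro x
    have h1 : g x = (∑ i : I, ENNReal.ofReal (p i x) * q (S i x)).toReal := by
      rw [hgdef]; exact congrArg ENNReal.toReal (hharm x)
    rw [h1, ENNReal.toReal_sum fun i _ =>
      ENNReal.mul_ne_top ENNReal.ofReal_ne_top (hq_ne_top (S i x))]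
    exact Finset.sum_congr rfl fun i _ => by
      rw [ENNReal.toReal_mul, ENNReal.toReal_ofReal (hp0 i x)]
  set F : X → ℝ := fun x => ∑ i : I, p i x * (g (S i x) - g x) ^ 2 with hFdef
  have hF0 : ∀ x, 0 ≤ F x := fun x =>
    Finset.sum_nonneg fun i _ => mul_nonneg (hp0 i x) (sq_nonneg _)
  have hFmeas : Measurable F := Finset.measurable_sum _ fun i _ =>
    (hp i).mul (((hgmeas.comp (hS i)).sub hgmeas).pow measurable_const)
  have hFeq : ∀ x, F x = (∑ i : I, p i x * (g (S i x)) ^ 2) - (g x) ^ 2 := by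
    intro x
    have e1 : ∀ i : I, p i x * (g (S i x) - g x) ^ 2
        = p i x * g (S i x) ^ 2 - (p i x * g (S i x)) * (2 * g x)
          + p i x * (g x) ^ 2 := fun i => by ring
    rw [hFdef]
    show (∑ i : I, p i x * (g (S i x) - g x) ^ 2) = _
    rw [Finset.sum_congr rfl fun i _ => e1 i, Finset.sum_add_distrib,
      Finset.sum_sub_distrib, ← Finset.sum_mul, ← Finset.sum_mul, ← hg_harm x, hp1 x]
    ring
  have hint1 : Integrable (fun x => ∑ i : I, p i x * (g (S i x)) ^ 2) m := by
    refine integrable_of_bdd (Finset.measurable_sum _ fun i _ =>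
      (hp i).mul ((hgmeas.comp (hS i)).pow measurable_const)) (C := 1) fun x => ?_
    rw [abs_of_nonneg (Finset.sum_nonneg fun i _ => mul_nonneg (hp0 i x) (sq_nonneg _))]
    calc ∑ i : I, p i x * g (S i x) ^ 2 ≤ ∑ i : I, p i x := by
          refine Finset.sum_le_sum fun i _ => ?_
          have hx2 := abs_le.1 (hgb (S i x))
          have h2 : g (S i x) ^ 2 ≤ 1 := by nlinarith [hx2.1, hx2.2]
          nlinarith [hp0 i x, h2, hg0 (S i x)]
      _ = 1 := hp1 x
  have hint2 : Integrable (fun x => (g x) ^ 2) m := by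
    refine integrable_of_bdd (hgmeas.pow measurable_const) (C := 1) fun x => ?_
    rw [abs_of_nonneg (sq_nonneg _)]
    have hx1 := abs_le.1 (hgb x)
    nlinarith [hx1.1, hx1.2]
  have hDzero : ∫ x, F x ∂m = 0 := by
    have : ∫ x, F x ∂m
        = ∫ x, ((∑ i : I, p i x * (g (S i x)) ^ 2) - (g x) ^ 2) ∂m :=
      integral_congr_ae (Filter.Eventually.of_forall hFeq)
    rw [this, integral_sub hint1 hint2]
    have := integral_inv hS hp hp0 hp1 hm (g := fun x => (g x) ^ 2)
      (hgmeas.pow measurable_const) (fun x => sq_nonneg _)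
    rw [this, sub_self]
  have hFint : Integrable F m := by
    refine integrable_of_bdd hFmeas (C := 4) fun x => ?_
    rw [abs_of_nonneg (hF0 x)]
    calc F x ≤ ∑ i : I, p i x * 4 := by
          refine Finset.sum_le_sum fun i _ => ?_
          have hx1 := abs_le.1 (hgb x)
          have hx2 := abs_le.1 (hgb (S i x))
          have h1 : (g (S i x) - g x) ^ 2 ≤ 4 := by nlinarith [hx1.1, hx1.2, hx2.1, hx2.2]
          exact mul_le_mul_of_nonneg_left h1 (hp0 i x)
      _ = 4 := by rw [← Finset.sum_mul, hp1 x, one_mul]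
  have hae : F =ᵐ[m] 0 := (integral_eq_zero_iff_of_nonneg hF0 hFint).1 hDzero
  filter_upwards [hae] with x hx i hpi
  have hx0 : (∑ j : I, p j x * (g (S j x) - g x) ^ 2) = 0 := hx
  have hterm : p i x * (g (S i x) - g x) ^ 2 = 0 := by
    have := (Finset.sum_eq_zero_iff_of_nonneg
      (fun j _ => mul_nonneg (hp0 j x) (sq_nonneg (g (S j x) - g x)))).1 hx0 i
      (Finset.mem_univ i)
    exact this
  have hgeq : g (S i x) = g x := by
    rcases mul_eq_zero.1 hterm with h | h
    · exact absurd h hpi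
    · have := pow_eq_zero_iff (n := 2) (by norm_num) |>.1 h
      linarith [sub_eq_zero.1 this]
  calc q (S i x) = ENNReal.ofReal (g (S i x)) := (ENNReal.ofReal_toReal (hq_ne_top _)).symm
    _ = ENNReal.ofReal (g x) := by rw [hgeq]
    _ = q x := ENNReal.ofReal_toReal (hq_ne_top _)


lemma bind_smul_ifs (hS : ∀ i, Measurable (S i)) (hp : ∀ i, Measurable (p i))
    (c : ℝ≥0∞) (m : Measure X) :
    (c • m).bind (ifsKernel S p) = c • m.bind (ifsKernel S p) := by
  ext B hB
  rw [Measure.bind_apply hB (measurable_ifsKernel hS hp).aemeasurable,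
    Measure.smul_apply, smul_eq_mul, lintegral_smul_measure,
    Measure.bind_apply hB (measurable_ifsKernel hS hp).aemeasurable, smul_eq_mul]

lemma withDensity_inv (hS : ∀ i, Measurable (S i)) (hp : ∀ i, Measurable (p i))
    {m : Measure X} (hm : m.bind (ifsKernel S p) = m)
    {q : X → ℝ≥0∞} (hq : Measurable q)
    (hloc : ∀ᵐ x ∂m, ∀ i : I, p i x ≠ 0 → q (S i x) = q x) :
    (m.withDensity q).bind (ifsKernel S p) = m.withDensity q := by
  ext B hB
  rw [Measure.bind_apply hB (measurable_ifsKernel hS hp).aemeasurable]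
  have hKmeas : Measurable fun x => ifsKernel S p x B :=
    (Measure.measurable_coe hB).comp (measurable_ifsKernel hS hp)
  have hstep : ∀ᵐ x ∂m, (q * fun x => ifsKernel S p x B) x
      = ∑ i : I, ENNReal.ofReal (p i x) * ((fun y => q y * B.indicator 1 y) (S i x)) := by
    filter_upwards [hloc] with x hx
    show q x * ifsKernel S p x B = _
    rw [ifsKernel_apply hB x, Finset.mul_sum]
    refine Finset.sum_congr rfl fun i _ => ?_
    by_cases hpi : p i x = 0
    · rw [hpi, ENNReal.ofReal_zero, zero_mul, mul_zero, zero_mul]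
    · rw [hx i hpi]
      ring
  calc ∫⁻ x, ifsKernel S p x B ∂(m.withDensity q)
      = ∫⁻ x, (q * fun x => ifsKernel S p x B) x ∂m :=
        lintegral_withDensity_eq_lintegral_mul m hq hKmeas
    _ = ∫⁻ x, ∑ i : I, ENNReal.ofReal (p i x)
          * ((fun y => q y * B.indicator 1 y) (S i x)) ∂m := lintegral_congr_ae hstep
    _ = ∫⁻ y, q y * B.indicator 1 y ∂m :=
        lintegral_inv (h := fun y => q y * B.indicator 1 y) hS hp hm
          (hq.mul (measurable_one.indicator hB))
    _ = (m.withDensity q) B := by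
        rw [withDensity_apply _ hB, ← lintegral_indicator hB]
        refine lintegral_congr fun y => ?_
        by_cases hy : y ∈ B
        · rw [Set.indicator_of_mem hy, Set.indicator_of_mem hy, Pi.one_apply, mul_one]
        · rw [Set.indicator_of_notMem hy, Set.indicator_of_notMem hy, mul_zero]

lemma null_propagate (hS : ∀ i, Measurable (S i)) (hp : ∀ i, Measurable (p i))
    (hp0 : ∀ i x, 0 ≤ p i x)
    {m : Measure X} (hm : m.bind (ifsKernel S p) = m)
    {N : Set X} (hN : MeasurableSet N) (h0 : m N = 0) :
    ∀ l : List I, m {x | wtWord S p l x ≠ 0 ∧ iterWord S l x ∈ N} = 0 := by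
  intro l
  induction l with
  | nil =>
    refine measure_mono_null (fun x hx => ?_) h0
    exact hx.2
  | cons i l ih =>
    set N' : Set X := {y | wtWord S p l y ≠ 0 ∧ iterWord S l y ∈ N} with hN'def
    have hN'meas : MeasurableSet N' := by
      refine MeasurableSet.inter ?_ ((measurable_iterWord hS l) hN)
      exact ((measurable_wtWord hS hp l) (measurableSet_singleton 0)).compl
    have hsub : {x | wtWord S p (i :: l) x ≠ 0 ∧ iterWord S (i :: l) x ∈ N}
        ⊆ {x | p i x ≠ 0 ∧ S i x ∈ N'} := by
      intro x hx
      obtain ⟨hw, hit⟩ := hx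
      have hw' : p i x * wtWord S p l (S i x) ≠ 0 := hw
      refine ⟨fun h => hw' (by rw [h, zero_mul]), ?_, hit⟩
      exact fun h => hw' (by rw [h, mul_zero])
    refine measure_mono_null hsub ?_
    have hlint : ∫⁻ x, ∑ j : I, ENNReal.ofReal (p j x)
        * N'.indicator (1 : X → ℝ≥0∞) (S j x) ∂m = 0 := by
      rw [lintegral_inv (h := N'.indicator (1 : X → ℝ≥0∞)) hS hp hm
        (measurable_one.indicator hN'meas)]
      rw [lintegral_indicator hN'meas]
      simp only [Pi.one_apply]
      rw [setLIntegral_one]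
      exact ih
    have hae := (lintegral_eq_zero_iff (Finset.measurable_sum _ fun j _ =>
      ((hp j).ennreal_ofReal).mul ((measurable_one.indicator hN'meas).comp (hS j)))).1 hlint
    refine measure_eq_zero_iff_ae_notMem.2 ?_
    filter_upwards [hae] with x hx
    rintro ⟨hpi, hSN⟩
    have hz : (∑ j : I, ENNReal.ofReal (p j x) * N'.indicator (1 : X → ℝ≥0∞) (S j x)) = 0 := hx
    have hterm : ENNReal.ofReal (p i x) * N'.indicator (1 : X → ℝ≥0∞) (S i x) = 0 :=
      (Finset.sum_eq_zero_iff).1 hz i (Finset.mem_univ i)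
    rw [Set.indicator_of_mem hSN, Pi.one_apply, mul_one, ENNReal.ofReal_eq_zero] at hterm
    exact hpi (le_antisymm hterm (hp0 i x))


end

/-- an invariant probability measure absolutely continuous w.r.t. an ergodic probability
measure equals it. -/
lemma ergodic_absCont_eq {α : Type*} [MeasurableSpace α] {T : α → α} {ν ν₁ : Measure α}
    [IsProbabilityMeasure ν] [IsProbabilityMeasure ν₁]
    (hE : Ergodic T ν) (hinv : MeasurePreserving T ν₁ ν₁) (hac : ν₁ ≪ ν) : ν₁ = ν := by
  set g : α → ℝ≥0∞ := ν₁.rnDeriv ν with hgdef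
  have hgmeas : Measurable g := Measure.measurable_rnDeriv ν₁ ν
  have hwd : ν.withDensity g = ν₁ := Measure.withDensity_rnDeriv_eq ν₁ ν hac
  have hν₁app : ∀ F : Set α, MeasurableSet F → ν₁ F = ∫⁻ x in F, g x ∂ν := fun F hF => by
    rw [← hwd, withDensity_apply _ hF]
  have hTmeas : Measurable T := hE.toMeasurePreserving.measurable
  set E : Set α := {z | g z < 1} with hEdef
  have hEmeas : MeasurableSet E := hgmeas measurableSet_Iio
  have hTEmeas : MeasurableSet (T ⁻¹' E) := hTmeas hEmeas
  -- the two "one-sided differences" have equal measure, for both ν and ν₁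
  have key : ∀ (ρ : Measure α) , IsProbabilityMeasure ρ → ρ (T ⁻¹' E) = ρ E →
      ρ (T ⁻¹' E \ E) = ρ (E \ T ⁻¹' E) := by
    intro ρ _ hρ
    have h1 : ρ (T ⁻¹' E ∩ E) + ρ (T ⁻¹' E \ E) = ρ (T ⁻¹' E) :=
      measure_inter_add_diff _ hEmeas
    have h2 : ρ (E ∩ T ⁻¹' E) + ρ (E \ T ⁻¹' E) = ρ E :=
      measure_inter_add_diff _ hTEmeas
    rw [Set.inter_comm] at h2
    have h3 : ρ (T ⁻¹' E ∩ E) + ρ (T ⁻¹' E \ E) = ρ (T ⁻¹' E ∩ E) + ρ (E \ T ⁻¹' E) := by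
      rw [h1, h2, hρ]
    exact (ENNReal.add_right_inj (measure_ne_top ρ _)).1 h3
  have hdν := key ν inferInstance (hE.toMeasurePreserving.measure_preimage
    hEmeas.nullMeasurableSet)
  have hdν₁ := key ν₁ inferInstance (hinv.measure_preimage hEmeas.nullMeasurableSet)
  -- ν (E \ T⁻¹ E) = 0
  have hd2 : ν (E \ T ⁻¹' E) = 0 := by
    by_contra hne
    have hd2meas : MeasurableSet (E \ T ⁻¹' E) := hEmeas.diff hTEmeas
    have hd1meas : MeasurableSet (T ⁻¹' E \ E) := hTEmeas.diff hEmeas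
    -- chain of inequalities
    have hA : ν (T ⁻¹' E \ E) ≤ ν₁ (T ⁻¹' E \ E) := by
      rw [hν₁app _ hd1meas, ← setLIntegral_one]
      refine setLIntegral_mono hgmeas fun x hx => ?_
      have : ¬ g x < 1 := fun h => hx.2 h
      exact not_lt.1 this
    have hB : ν₁ (E \ T ⁻¹' E) ≤ ν (E \ T ⁻¹' E) := by
      rw [hν₁app _ hd2meas, ← setLIntegral_one]
      refine setLIntegral_mono measurable_const fun x hx => (le_of_lt hx.1)
    have hchain : ν (E \ T ⁻¹' E) = ∫⁻ x in E \ T ⁻¹' E, g x ∂ν := by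
      refine le_antisymm ?_ ?_
      · calc ν (E \ T ⁻¹' E) = ν (T ⁻¹' E \ E) := hdν.symm
          _ ≤ ν₁ (T ⁻¹' E \ E) := hA
          _ = ν₁ (E \ T ⁻¹' E) := hdν₁
          _ = ∫⁻ x in E \ T ⁻¹' E, g x ∂ν := hν₁app _ hd2meas
      · calc ∫⁻ x in E \ T ⁻¹' E, g x ∂ν = ν₁ (E \ T ⁻¹' E) := (hν₁app _ hd2meas).symm
          _ ≤ ν (E \ T ⁻¹' E) := hB
    -- but g < 1 on the set, and the integral of 1 equals the measure: contradiction
    have hfin : ∫⁻ x in E \ T ⁻¹' E, g x ∂ν ≠ ⊤ := by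
      rw [← hchain]; exact measure_ne_top _ _
    have hle_ae : g ≤ᵐ[ν.restrict (E \ T ⁻¹' E)] fun _ => 1 := by
      refine (ae_restrict_iff' hd2meas).2 (Filter.Eventually.of_forall fun x hx => ?_)
      exact le_of_lt hx.1
    have hsub0 : ∫⁻ x in E \ T ⁻¹' E, ((fun _ => (1:ℝ≥0∞)) x - g x) ∂ν = 0 := by
      rw [lintegral_sub hgmeas hfin hle_ae, setLIntegral_one, ← hchain, tsub_self]
    have hae0 := (lintegral_eq_zero_iff (measurable_const.sub hgmeas)).1 hsub0
    have hge_ae : ∀ᵐ x ∂(ν.restrict (E \ T ⁻¹' E)), (1:ℝ≥0∞) ≤ g x := by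
      filter_upwards [hae0] with x hx
      exact tsub_eq_zero_iff_le.1 hx
    have hlt_ae : ∀ᵐ x ∂(ν.restrict (E \ T ⁻¹' E)), g x < 1 := by
      refine (ae_restrict_iff' hd2meas).2 (Filter.Eventually.of_forall fun x hx => hx.1)
    have : ∀ᵐ _x ∂(ν.restrict (E \ T ⁻¹' E)), False := by
      filter_upwards [hge_ae, hlt_ae] with x h1 h2
      exact absurd h1 (not_le.2 h2)
    have hzero : ν.restrict (E \ T ⁻¹' E) Set.univ = 0 := by
      have := ae_iff.1 this
      simpa using this
    rw [Measure.restrict_apply_univ] at hzero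
    exact hne hzero
  have hd1 : ν (T ⁻¹' E \ E) = 0 := by rw [hdν]; exact hd2
  -- E is a.e. invariant, hence null or conull
  have hEae : E =ᵐ[ν] T ⁻¹' E := ae_eq_set.2 ⟨hd2, hd1⟩
  rcases hE.quasiErgodic.ae_empty_or_univ₀ hEmeas.nullMeasurableSet hEae.symm
    with hcase | hcase
  · -- E is null : g ≥ 1 a.e., hence ν₁ ≥ ν, hence equal
    have hEnull : ν E = 0 := by
      have := ae_eq_empty.1 hcase; exact this
    have hge : ∀ᵐ x ∂ν, (1:ℝ≥0∞) ≤ g x := by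
      have : ∀ᵐ x ∂ν, x ∉ E := measure_eq_zero_iff_ae_notMem.1 hEnull
      filter_upwards [this] with x hx
      exact not_lt.1 hx
    have hmono : ∀ F : Set α, MeasurableSet F → ν F ≤ ν₁ F := by
      intro F hF
      rw [hν₁app _ hF, ← setLIntegral_one]
      exact lintegral_mono_ae (ae_restrict_of_ae hge)
    ext F hF
    refine le_antisymm ?_ (hmono F hF)
    have h1 : ν₁ F + ν₁ Fᶜ = 1 := by
      rw [measure_add_measure_compl hF, measure_univ]
    have h2 : ν F + ν Fᶜ = 1 := by
      rw [measure_add_measure_compl hF, measure_univ]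
    have h3 : ν₁ F + ν Fᶜ ≤ ν F + ν Fᶜ := by
      calc ν₁ F + ν Fᶜ ≤ ν₁ F + ν₁ Fᶜ := add_le_add_right (hmono _ hF.compl) _
        _ = 1 := h1
        _ = ν F + ν Fᶜ := h2.symm
    exact ENNReal.le_of_add_le_add_right (measure_ne_top ν Fᶜ) h3
  · -- E is conull : g < 1 a.e., contradicting ∫ g = 1
    exfalso
    have hEc : ν Eᶜ = 0 := ae_eq_univ.1 hcase
    have hlt : ∀ᵐ x ∂ν, g x < 1 := by
      filter_upwards [measure_eq_zero_iff_ae_notMem.1 hEc] with x hx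
      exact not_not.1 hx
    have hint1 : ∫⁻ x, g x ∂ν = 1 := by
      have h := congrArg (fun m : Measure α => m Set.univ) hwd
      simp only [withDensity_apply _ MeasurableSet.univ, Measure.restrict_univ,
        measure_univ] at h
      exact h
    have hle : g ≤ᵐ[ν] fun _ => 1 := hlt.mono fun x h => le_of_lt h
    have hsub : ∫⁻ x, ((fun _ => (1:ℝ≥0∞)) x - g x) ∂ν = 0 := by
      rw [lintegral_sub hgmeas (by rw [hint1]; exact ENNReal.one_ne_top) hle,
        lintegral_one, measure_univ, hint1, tsub_self]
    have hge := (lintegral_eq_zero_iff (measurable_const.sub hgmeas)).1 hsub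
    have hfalse : ∀ᵐ _x ∂ν, False := by
      filter_upwards [hge, hlt] with x h1 h2
      exact absurd (tsub_eq_zero_iff_le.1 h1) (not_le.2 h2)
    have h0 : ν Set.univ = 0 := by simpa using ae_iff.1 hfalse
    rw [measure_univ] at h0
    exact one_ne_zero h0

end S8

/-- For a measurable IFS `{X, S_i, p_i}` (`card I ≥ 2`) with invariant
probability measure `μ` and the associated measure `ν(d(x,ω)) = p_x(dω)μ(dx)` on `X × Σ`,
`μ` is ergodic for the IFS (extreme among invariant probability measures) iff `ν` is
ergodic for the skew product `S(x,ω) = (S_{ω₁}(x), σω)`. -/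
theorem stmt8 {X I : Type*} [MetricSpace X] [TopologicalSpace.SeparableSpace X]
    [MeasurableSpace X] [BorelSpace X]
    [Fintype I] [MeasurableSpace I] [MeasurableSingletonClass I]
    (hcard : 2 ≤ Fintype.card I)
    (S : I → X → X) (hS : ∀ i, Measurable (S i))
    (p : I → X → ℝ) (hp : ∀ i, Measurable (p i))
    (hp0 : ∀ i x, 0 ≤ p i x) (hp1 : ∀ x, ∑ i : I, p i x = 1)
    (μ : Measure X) [IsProbabilityMeasure μ] (hμinv : μ.bind (ifsKernel S p) = μ)
    (px : X → Measure (ℕ → I)) (hpxprob : ∀ x, IsProbabilityMeasure (px x))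
    (hpxmeas : Measurable px)
    (hpxcyl : ∀ (x : X) (l : List I), px x (cylinder l) = ENNReal.ofReal (wtWord S p l x))
    (ν : Measure (X × (ℕ → I)))
    (hν : ∀ A : Set (X × (ℕ → I)), MeasurableSet A →
      ν A = ∫⁻ x, px x {ω | (x, ω) ∈ A} ∂μ) :
    (∀ (μ₁ μ₂ : Measure X) (t : ℝ≥0), IsProbabilityMeasure μ₁ →
        μ₁.bind (ifsKernel S p) = μ₁ → IsProbabilityMeasure μ₂ →
        μ₂.bind (ifsKernel S p) = μ₂ → 0 < t → t < 1 →
        μ = (t : ℝ≥0∞) • μ₁ + ((1 - t : ℝ≥0) : ℝ≥0∞) • μ₂ → μ₁ = μ₂) ↔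
      Ergodic (fun z : X × (ℕ → I) => (S (z.2 0) z.1, fun n => z.2 (n + 1))) ν := by
  classical
  set κ : Kernel X (ℕ → I) := S8.pker hpxmeas with hκdef
  haveI := S8.pker_markov hpxmeas hpxprob
  have hνeq : ν = μ ⊗ₘ κ := by
    refine Measure.ext fun A hA => ?_
    rw [hν A hA, Measure.compProd_apply hA]
    rfl
  haveI : IsProbabilityMeasure ν := by
    rw [hνeq]; infer_instance
  have hTdef : (fun z : X × (ℕ → I) => (S (z.2 0) z.1, fun n => z.2 (n + 1))) = S8.Tsk S := rfl
  have hMP : MeasurePreserving (S8.Tsk S) ν ν := by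
    rw [hνeq]
    exact S8.measurePreserving_Tsk hS hp hp0 hpxprob hpxmeas hpxcyl hμinv
  rw [hTdef]
  constructor
  · -- extremality implies ergodicity
    intro hext
    refine ⟨hMP, ⟨fun A hA hTA => ?_⟩⟩
    rw [Filter.eventuallyConst_set']
    set q : X → ℝ≥0∞ := fun x => px x {ω | (x, ω) ∈ A} with hqdef
    have hqmeas : Measurable q :=
      Kernel.measurable_kernel_prodMk_left (κ := κ) hA
    have hq1 : ∀ x, q x ≤ 1 := fun x => prob_le_one
    have hharm : ∀ x, q x = ∑ i : I, ENNReal.ofReal (p i x) * q (S i x) := fun x =>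
      S8.fib_harmonic hp0 hpxprob hpxcyl hA hTA x
    have hνA : ν A = ∫⁻ x, q x ∂μ := hν A hA
    set a := ν A with hadef
    by_cases ha0 : a = 0
    · exact Or.inl (ae_eq_empty.2 ha0)
    by_cases ha1 : a = 1
    · refine Or.inr (ae_eq_univ.2 ?_)
      rw [measure_compl hA (measure_ne_top ν A), measure_univ, ← hadef, ha1, tsub_self]
    exfalso
    have hatop : a ≠ ⊤ := measure_ne_top ν A
    have hale : a ≤ 1 := prob_le_one
    have halt : a < 1 := lt_of_le_of_ne hale ha1
    have hloc := S8.harmonic_loc_const hS hp hp0 hp1 hμinv hqmeas hq1 hharm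
    have hWq : (μ.withDensity q).bind (ifsKernel S p) = μ.withDensity q :=
      S8.withDensity_inv hS hp hμinv hqmeas hloc
    have hq'meas : Measurable fun x => 1 - q x := measurable_const.sub hqmeas
    have hloc' : ∀ᵐ x ∂μ, ∀ i : I, p i x ≠ 0
        → (fun y => 1 - q y) (S i x) = (fun y => 1 - q y) x := by
      filter_upwards [hloc] with x hx i hi
      show 1 - q (S i x) = 1 - q x
      rw [hx i hi]
    have hWq' : (μ.withDensity fun x => 1 - q x).bind (ifsKernel S p)
        = μ.withDensity fun x => 1 - q x :=
      S8.withDensity_inv hS hp hμinv hq'meas hloc'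
    have hqint : ∫⁻ x, q x ∂μ = a := hνA.symm
    have hWq_univ : μ.withDensity q Set.univ = a := by
      rw [withDensity_apply _ MeasurableSet.univ, Measure.restrict_univ, hqint]
    have hq_ae_le : q ≤ᵐ[μ] fun _ => 1 := Filter.Eventually.of_forall hq1
    have hsublint : ∫⁻ x, ((fun _ => (1:ℝ≥0∞)) x - q x) ∂μ = 1 - a := by
      rw [lintegral_sub hqmeas (by rw [hqint]; exact hatop) hq_ae_le,
        lintegral_one, measure_univ, hqint]
    have hWq'_univ : (μ.withDensity fun x => 1 - q x) Set.univ = 1 - a := by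
      rw [withDensity_apply _ MeasurableSet.univ, Measure.restrict_univ]
      exact hsublint
    have h1a0 : (1 : ℝ≥0∞) - a ≠ 0 := by
      rw [ne_eq, tsub_eq_zero_iff_le]
      exact not_le.2 halt
    have h1atop : (1 : ℝ≥0∞) - a ≠ ⊤ := by
      exact ne_top_of_le_ne_top ENNReal.one_ne_top tsub_le_self
    set μ1 : Measure X := a⁻¹ • μ.withDensity q with hμ1def
    set μ2 : Measure X := (1 - a)⁻¹ • (μ.withDensity fun x => 1 - q x) with hμ2def
    haveI hPμ1 : IsProbabilityMeasure μ1 := ⟨by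
      rw [hμ1def, Measure.smul_apply, hWq_univ, smul_eq_mul,
        ENNReal.inv_mul_cancel ha0 hatop]⟩
    haveI hPμ2 : IsProbabilityMeasure μ2 := ⟨by
      rw [hμ2def, Measure.smul_apply, hWq'_univ, smul_eq_mul,
        ENNReal.inv_mul_cancel h1a0 h1atop]⟩
    have hbind1 : μ1.bind (ifsKernel S p) = μ1 := by
      rw [hμ1def, S8.bind_smul_ifs hS hp, hWq]
    have hbind2 : μ2.bind (ifsKernel S p) = μ2 := by
      rw [hμ2def, S8.bind_smul_ifs hS hp, hWq']
    have hsumμ : μ.withDensity q + (μ.withDensity fun x => 1 - q x) = μ := by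
      rw [← withDensity_add_left hqmeas]
      have : (q + fun x => 1 - q x) = fun _ => (1:ℝ≥0∞) :=
        funext fun x => add_tsub_cancel_of_le (hq1 x)
      rw [this, withDensity_const, one_smul]
    set t : ℝ≥0 := a.toNNReal with htdef
    have hta : (t : ℝ≥0∞) = a := ENNReal.coe_toNNReal hatop
    have ht0 : 0 < t := ENNReal.toNNReal_pos ha0 hatop
    have ht1 : t < 1 := by
      have h : (t : ℝ≥0∞) < ((1:ℝ≥0) : ℝ≥0∞) := by
        rw [hta]; simpa using halt
      exact_mod_cast h
    have hdecμ : μ = (t : ℝ≥0∞) • μ1 + ((1 - t : ℝ≥0) : ℝ≥0∞) • μ2 := by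
      have hc : ((1 - t : ℝ≥0) : ℝ≥0∞) = 1 - a := by
        rw [ENNReal.coe_sub, ENNReal.coe_one, hta]
      rw [hta, hc, hμ1def, hμ2def, smul_smul, smul_smul,
        ENNReal.mul_inv_cancel ha0 hatop, ENNReal.mul_inv_cancel h1a0 h1atop,
        one_smul, one_smul, hsumμ]
    have hμeq : μ1 = μ2 := hext μ1 μ2 t hPμ1 hbind1 hPμ2 hbind2 ht0 ht1 hdecμ
    have hcross : (1 - a) • μ.withDensity q = a • (μ.withDensity fun x => 1 - q x) := by
      calc (1 - a) • μ.withDensity q = (a * (1 - a)) • μ1 := by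
            rw [hμ1def, smul_smul, mul_comm a (1 - a), mul_assoc,
              ENNReal.mul_inv_cancel ha0 hatop, mul_one]
        _ = (a * (1 - a)) • μ2 := by rw [hμeq]
        _ = a • (μ.withDensity fun x => 1 - q x) := by
            rw [hμ2def, smul_smul, mul_assoc, ENNReal.mul_inv_cancel h1a0 h1atop, mul_one]
    have hkey : μ.withDensity q = a • μ := by
      calc μ.withDensity q = (1:ℝ≥0∞) • μ.withDensity q := (one_smul _ _).symm
        _ = (a + (1 - a)) • μ.withDensity q := by rw [add_tsub_cancel_of_le hale]
        _ = a • μ.withDensity q + (1 - a) • μ.withDensity q := add_smul _ _ _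
        _ = a • μ.withDensity q + a • (μ.withDensity fun x => 1 - q x) := by rw [hcross]
        _ = a • (μ.withDensity q + (μ.withDensity fun x => 1 - q x)) := (smul_add _ _ _).symm
        _ = a • μ := by rw [hsumμ]
    have hqa : q =ᵐ[μ] fun _ => a := by
      refine ae_eq_of_forall_setLIntegral_eq_of_sigmaFinite hqmeas measurable_const
        fun s hs _ => ?_
      rw [← withDensity_apply _ hs, hkey, Measure.smul_apply, smul_eq_mul,
        setLIntegral_const, mul_comm]
    set N : Set X := {x | q x ≠ a} with hNdef
    have hNmeas : MeasurableSet N := (hqmeas (measurableSet_singleton a)).compl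
    have hN0 : μ N = 0 := ae_iff.1 hqa
    have hprop := S8.null_propagate hS hp hp0 hμinv hNmeas hN0
    haveI : IsFiniteMeasure (a • ν) := ⟨by
      rw [Measure.smul_apply, measure_univ, smul_eq_mul, mul_one]
      exact hatop.lt_top⟩
    have hrear : ν.restrict A = a • ν := by
      refine S8.prodCylExt fun B hB l => ?_
      have hcyl := S8.measurableSet_cylinder (I := I) l
      have hrect : MeasurableSet (B ×ˢ cylinder l) := hB.prod hcyl
      rw [Measure.restrict_apply hrect, Measure.smul_apply, smul_eq_mul]
      have hint : ν (B ×ˢ cylinder l ∩ A)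
          = ∫⁻ x, B.indicator
              (fun y => px y (cylinder l ∩ {ω | (y, ω) ∈ A})) x ∂μ := by
        rw [hν _ (hrect.inter hA)]
        refine lintegral_congr fun x => ?_
        by_cases hxB : x ∈ B
        · rw [Set.indicator_of_mem hxB]
          congr 1
          ext ω
          simp [hxB, _root_.cylinder]
        · rw [Set.indicator_of_notMem hxB]
          have : {ω : ℕ → I | (x, ω) ∈ B ×ˢ cylinder l ∩ A} = ∅ := by
            ext ω; simp [hxB]
          rw [this, measure_empty]
      have hrhs : ν (B ×ˢ cylinder l)
          = ∫⁻ x, B.indicator (fun y => px y (cylinder l)) x ∂μ := by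
        rw [hν _ hrect]
        refine lintegral_congr fun x => ?_
        by_cases hxB : x ∈ B
        · rw [Set.indicator_of_mem hxB]
          congr 1
          ext ω; simp [hxB]
        · rw [Set.indicator_of_notMem hxB]
          have : {ω : ℕ → I | (x, ω) ∈ B ×ˢ cylinder l} = ∅ := by
            ext ω; simp [hxB]
          rw [this, measure_empty]
      rw [hint, hrhs]
      have hcylfib := S8.cylFib hp0 hpxprob hpxcyl hA hTA l
      have hae2 : (fun x => B.indicator
            (fun y => px y (cylinder l ∩ {ω | (y, ω) ∈ A})) x)
          =ᵐ[μ] fun x => a * B.indicator (fun y => px y (cylinder l)) x := by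
        filter_upwards [measure_eq_zero_iff_ae_notMem.1 (hprop l)] with x hx
        by_cases hxB : x ∈ B
        · rw [Set.indicator_of_mem hxB, Set.indicator_of_mem hxB, hcylfib x, hpxcyl x l]
          by_cases hw : wtWord S p l x = 0
          · rw [hw, ENNReal.ofReal_zero, zero_mul, mul_zero]
          · have hiter : iterWord S l x ∉ N := fun hin => hx ⟨hw, hin⟩
            have hqi : px (iterWord S l x) {ω | (iterWord S l x, ω) ∈ A} = a :=
              not_not.1 hiter
            rw [hqi, mul_comm]
        · rw [Set.indicator_of_notMem hxB, Set.indicator_of_notMem hxB, mul_zero]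
      have hbm : Measurable fun y : X => B.indicator (fun y => px y (cylinder l)) y :=
        ((Measure.measurable_coe hcyl).comp hpxmeas).indicator hB
      rw [lintegral_congr_ae hae2, lintegral_const_mul _ hbm]
    have hAA : a = a * a := by
      have h := congrArg (fun m : Measure (X × (ℕ → I)) => m A) hrear
      simpa [Measure.restrict_apply_self, Measure.smul_apply, smul_eq_mul, ← hadef] using h
    have hlt : a < a := by
      calc a = a * a := hAA
        _ < a * 1 := ENNReal.mul_lt_mul_right ha0 hatop halt
        _ = a := mul_one a
    exact absurd hlt (lt_irrefl a)
  · -- ergodicity implies extremality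
    intro hErg μ₁ μ₂ t hPμ₁ hI1 hPμ₂ hI2 ht0 ht1 hdec
    haveI := hPμ₁
    haveI := hPμ₂
    set ν₁ : Measure (X × (ℕ → I)) := μ₁ ⊗ₘ κ with hν₁def
    set ν₂ : Measure (X × (ℕ → I)) := μ₂ ⊗ₘ κ with hν₂def
    haveI : IsProbabilityMeasure ν₁ := by rw [hν₁def]; infer_instance
    haveI : IsProbabilityMeasure ν₂ := by rw [hν₂def]; infer_instance
    have hMP1 : MeasurePreserving (S8.Tsk S) ν₁ ν₁ :=
      S8.measurePreserving_Tsk hS hp hp0 hpxprob hpxmeas hpxcyl hI1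
    have hMP2 : MeasurePreserving (S8.Tsk S) ν₂ ν₂ :=
      S8.measurePreserving_Tsk hS hp hp0 hpxprob hpxmeas hpxcyl hI2
    have hsum : ∀ C : Set (X × (ℕ → I)), MeasurableSet C →
        ν C = (t : ℝ≥0∞) * ν₁ C + ((1 - t : ℝ≥0) : ℝ≥0∞) * ν₂ C := by
      intro C hC
      rw [hν C hC, hν₁def, hν₂def, Measure.compProd_apply hC, Measure.compProd_apply hC]
      conv_lhs => rw [hdec]
      rw [lintegral_add_measure, lintegral_smul_measure, lintegral_smul_measure]
      rfl
    have hac1 : ν₁ ≪ ν := by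
      refine Measure.AbsolutelyContinuous.mk fun s hs h0 => ?_
      have h := hsum s hs
      rw [h0] at h
      have hz := (add_eq_zero.1 h.symm).1
      rcases mul_eq_zero.1 hz with hzz | hzz
      · exact absurd hzz (by exact_mod_cast ht0.ne')
      · exact hzz
    have hac2 : ν₂ ≪ ν := by
      refine Measure.AbsolutelyContinuous.mk fun s hs h0 => ?_
      have h := hsum s hs
      rw [h0] at h
      have hz := (add_eq_zero.1 h.symm).2
      rcases mul_eq_zero.1 hz with hzz | hzz
      · exfalso
        have h1t : (1 - t : ℝ≥0) ≠ 0 := by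
          rw [ne_eq, tsub_eq_zero_iff_le]
          exact not_le.2 ht1
        exact h1t (by exact_mod_cast hzz)
      · exact hzz
    have hν₁ν : ν₁ = ν := S8.ergodic_absCont_eq hErg hMP1 hac1
    have hν₂ν : ν₂ = ν := S8.ergodic_absCont_eq hErg hMP2 hac2
    have f1 : ν₁.fst = μ₁ := Measure.fst_compProd μ₁ κ
    have f2 : ν₂.fst = μ₂ := Measure.fst_compProd μ₂ κ
    rw [← f1, ← f2, hν₁ν, hν₂ν]
end

section
/- Let S₁(x) = x/3 and S₂(x) = (x+2)/3 on X = [0,1], and let p₁, p₂ : X → [0,1] be Borel measurable with p₁ + p₂ ≡ 1 and min(p₁(x), p₂(x)) ≥ p for a fixed p ∈ (0,1/2), so max ≤ 1−p. If μ is any probability measure invariant under this iterated function system, then μ([k·3⁻ⁿ, (k+1)·3⁻ⁿ)) ≤ (1−p)ⁿ for every n ∈ ℕ and 0 ≤ k < 3ⁿ; in particular μ has no atoms. -/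
open MeasureTheory Set
open scoped ENNReal NNReal

/-- For the IFS `S₁(x) = x/3`, `S₂(x) = (x+2)/3` on `X = [0,1]` with
Borel probabilities `p₁ + p₂ = 1`, `min(p₁,p₂) ≥ p` for some `p ∈ (0,1/2)`: any invariant
probability measure `μ` satisfies `μ([k·3⁻ⁿ,(k+1)·3⁻ⁿ)) ≤ (1-p)ⁿ` for all `n` and
`0 ≤ k < 3ⁿ`; in particular `μ` has no atoms. -/
theorem stmt11 (p : ℝ) (hp0 : 0 < p) (hp2 : p < 1 / 2)
    (p₁ p₂ : ℝ → ℝ) (hm₁ : Measurable p₁) (hm₂ : Measurable p₂)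
    (hrange₁ : ∀ x, p₁ x ∈ Icc (0 : ℝ) 1) (hrange₂ : ∀ x, p₂ x ∈ Icc (0 : ℝ) 1)
    (hsum : ∀ x, p₁ x + p₂ x = 1)
    (hlow : ∀ x, p ≤ min (p₁ x) (p₂ x))
    (μ : Measure ℝ) [IsProbabilityMeasure μ] (hsupp : μ (Icc (0 : ℝ) 1) = 1)
    (hinv : ∀ B : Set ℝ, MeasurableSet B →
      μ B = ∫⁻ x, (ENNReal.ofReal (p₁ x) * B.indicator (fun _ => (1 : ℝ≥0∞)) (x / 3)
        + ENNReal.ofReal (p₂ x) * B.indicator (fun _ => (1 : ℝ≥0∞)) ((x + 2) / 3)) ∂μ) :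
    (∀ n k : ℕ, k < 3 ^ n →
        μ (Ico ((k : ℝ) / 3 ^ n) (((k : ℝ) + 1) / 3 ^ n)) ≤ ENNReal.ofReal ((1 - p) ^ n)) ∧
      ∀ x : ℝ, μ {x} = 0 := by
  have hp1 : p < 1 := hp2.trans (by norm_num)
  have h1p : (0:ℝ) < 1 - p := by linarith
  set q : ℝ≥0∞ := ENNReal.ofReal (1 - p) with hq
  have hqlt1 : q < 1 := by
    rw [hq]; exact ENNReal.ofReal_lt_one.mpr (by linarith)
  have hqne : q ≠ ⊤ := ENNReal.ofReal_ne_top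
  have hb₁ : ∀ x, ENNReal.ofReal (p₁ x) ≤ q := by
    intro x
    apply ENNReal.ofReal_le_ofReal
    have h1 := (hlow x).trans (min_le_right (p₁ x) (p₂ x))
    have h2 := hsum x
    linarith
  have hb₂ : ∀ x, ENNReal.ofReal (p₂ x) ≤ q := by
    intro x
    apply ENNReal.ofReal_le_ofReal
    have h1 := (hlow x).trans (min_le_left (p₁ x) (p₂ x))
    have h2 := hsum x
    linarith
  have hcompl : μ (Icc (0:ℝ) 1)ᶜ = 0 := by
    have h := measure_compl (measurableSet_Icc (a := (0:ℝ)) (b := 1)) (measure_ne_top μ _)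
    rw [hsupp, measure_univ] at h
    simpa using h
  have hout : ∀ s : Set ℝ, Disjoint s (Icc (0:ℝ) 1) → μ s = 0 := fun s hs =>
    le_antisymm ((measure_mono hs.subset_compl_right).trans_eq hcompl) (zero_le)
  have key : ∀ n : ℕ, ∀ k : ℕ,
      μ (Ico ((k : ℝ) / 3 ^ n) (((k : ℝ) + 1) / 3 ^ n)) ≤ q ^ n := by
    intro n
    induction n with
    | zero =>
        intro k
        rw [pow_zero]
        exact prob_le_one
    | succ n ih =>
        intro k
        have h3 : (0:ℝ) < 3 ^ n := by positivity
        set A : Set ℝ := Ico ((k:ℝ)/3^n) (((k:ℝ)+1)/3^n) with hA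
        set B : Set ℝ := Ico ((k:ℝ)/3^n - 2) (((k:ℝ)+1)/3^n - 2) with hB
        have e1 : ∀ c x : ℝ, c / 3 ^ (n+1) ≤ x / 3 ↔ c / 3 ^ n ≤ x := by
          intro c x
          rw [pow_succ, div_le_div_iff₀ (by positivity) (by norm_num : (0:ℝ) < 3),
            div_le_iff₀ h3]
          constructor <;> intro h <;> nlinarith
        have e2 : ∀ c x : ℝ, x / 3 < c / 3 ^ (n+1) ↔ x < c / 3 ^ n := by
          intro c x
          rw [pow_succ, div_lt_div_iff₀ (by norm_num : (0:ℝ) < 3) (by positivity),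
            lt_div_iff₀ h3]
          constructor <;> intro h <;> nlinarith
        have hindA : ∀ x : ℝ,
            (Ico ((k:ℝ)/3^(n+1)) (((k:ℝ)+1)/3^(n+1))).indicator
              (fun _ => (1:ℝ≥0∞)) (x/3) = A.indicator (fun _ => (1:ℝ≥0∞)) x := by
          intro x
          have hmem : x/3 ∈ Ico ((k:ℝ)/3^(n+1)) (((k:ℝ)+1)/3^(n+1)) ↔ x ∈ A := by
            rw [hA, mem_Ico, mem_Ico, e1, e2]
          simp only [Set.indicator_apply, hmem]
        have hindB : ∀ x : ℝ,
            (Ico ((k:ℝ)/3^(n+1)) (((k:ℝ)+1)/3^(n+1))).indicator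
              (fun _ => (1:ℝ≥0∞)) ((x+2)/3) = B.indicator (fun _ => (1:ℝ≥0∞)) x := by
          intro x
          have hmem : (x+2)/3 ∈ Ico ((k:ℝ)/3^(n+1)) (((k:ℝ)+1)/3^(n+1)) ↔ x ∈ B := by
            rw [hB, mem_Ico, mem_Ico, e1, e2]
            constructor
            · rintro ⟨h1, h2⟩; exact ⟨by linarith, by linarith⟩
            · rintro ⟨h1, h2⟩; exact ⟨by linarith, by linarith⟩
          simp only [Set.indicator_apply, hmem]
        have hmain : μ (Ico ((k:ℝ)/3^(n+1)) (((k:ℝ)+1)/3^(n+1))) ≤ q * μ A + q * μ B := by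
          rw [hinv _ measurableSet_Ico]
          calc ∫⁻ x, (ENNReal.ofReal (p₁ x) *
                  (Ico ((k:ℝ)/3^(n+1)) (((k:ℝ)+1)/3^(n+1))).indicator (fun _ => (1:ℝ≥0∞)) (x/3)
                + ENNReal.ofReal (p₂ x) *
                  (Ico ((k:ℝ)/3^(n+1)) (((k:ℝ)+1)/3^(n+1))).indicator (fun _ => (1:ℝ≥0∞)) ((x+2)/3)) ∂μ
              ≤ ∫⁻ x, (q * A.indicator (fun _ => (1:ℝ≥0∞)) x
                  + q * B.indicator (fun _ => (1:ℝ≥0∞)) x) ∂μ := by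
                apply lintegral_mono
                intro x
                dsimp only
                rw [hindA x, hindB x]
                gcongr
                exacts [hb₁ x, hb₂ x]
            _ = q * μ A + q * μ B := by
                rw [lintegral_add_left
                    ((measurable_const.indicator measurableSet_Ico).const_mul q),
                  lintegral_const_mul' _ _ hqne, lintegral_const_mul' _ _ hqne,
                  lintegral_indicator_const measurableSet_Ico,
                  lintegral_indicator_const measurableSet_Ico, one_mul, one_mul]
        rcases lt_or_ge k (2 * 3 ^ n) with hk | hk
        · have hB0 : μ B = 0 := by
            apply hout
            rw [Set.disjoint_left]
            intro x hx hx'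
            have hk' : ((k:ℝ) + 1) ≤ 2 * 3 ^ n := by
              have : (k:ℕ) + 1 ≤ 2 * 3 ^ n := hk
              exact_mod_cast this
            have h2 : ((k:ℝ)+1)/3^n ≤ 2 := by rw [div_le_iff₀ h3]; linarith
            have := hx.2
            have := hx'.1
            simp only [hB, mem_Ico] at hx
            linarith [hx.2, hx'.1]
          calc μ (Ico ((k:ℝ)/3^(n+1)) (((k:ℝ)+1)/3^(n+1))) ≤ q * μ A + q * μ B := hmain
            _ = q * μ A := by rw [hB0, mul_zero, add_zero]
            _ ≤ q * q ^ n := by gcongr; exact ih k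
            _ = q ^ (n+1) := by ring
        · have hA0 : μ A = 0 := by
            apply hout
            rw [Set.disjoint_left]
            intro x hx hx'
            have hk' : (2:ℝ) * 3 ^ n ≤ (k:ℝ) := by exact_mod_cast hk
            have h2 : (2:ℝ) ≤ (k:ℝ)/3^n := by rw [le_div_iff₀ h3]; linarith
            simp only [hA, mem_Ico] at hx
            linarith [hx.1, hx'.2]
          have hBeq : B = Ico (((k - 2 * 3 ^ n : ℕ):ℝ)/3^n) ((((k - 2 * 3 ^ n : ℕ):ℝ)+1)/3^n) := by
            rw [hB, Nat.cast_sub hk]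
            push_cast
            congr 1 <;> field_simp <;> ring
          calc μ (Ico ((k:ℝ)/3^(n+1)) (((k:ℝ)+1)/3^(n+1))) ≤ q * μ A + q * μ B := hmain
            _ = q * μ B := by rw [hA0, mul_zero, zero_add]
            _ ≤ q * q ^ n := by
                gcongr
                rw [hBeq]
                exact ih _
            _ = q ^ (n+1) := by ring
  constructor
  · intro n k _
    exact (key n k).trans_eq (by rw [hq, ← ENNReal.ofReal_pow (by linarith)])
  · intro x
    rcases le_or_gt 0 x with hx | hx
    · have hbound : ∀ n : ℕ, μ {x} ≤ q ^ n := by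
        intro n
        have h3 : (0:ℝ) < 3 ^ n := by positivity
        set k := ⌊x * 3 ^ n⌋₊ with hk
        have hx1 : (k:ℝ)/3^n ≤ x := by
          rw [div_le_iff₀ h3]
          exact Nat.floor_le (mul_nonneg hx h3.le)
        have hx2 : x < ((k:ℝ)+1)/3^n := by
          rw [lt_div_iff₀ h3]
          exact Nat.lt_floor_add_one (x * 3 ^ n)
        exact (measure_mono (show {x} ⊆ Ico ((k:ℝ)/3^n) (((k:ℝ)+1)/3^n) from singleton_subset_iff.mpr ⟨hx1, hx2⟩)).trans (key n k)
      have htend : Filter.Tendsto (fun n : ℕ => q ^ n) Filter.atTop (nhds 0) :=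
        ENNReal.tendsto_pow_atTop_nhds_zero_of_lt_one hqlt1
      exact le_antisymm (ge_of_tendsto' htend hbound) (zero_le)
    · exact hout _ (by
        rw [Set.disjoint_left]
        intro y hy hy'
        rw [mem_singleton_iff] at hy
        exact absurd hy'.1 (by rw [hy]; linarith))
end

section
/- Let {X, S_i, p_i} be a measurable iterated function system on a separable metric space with ergodic invariant probability measure μ, and define h_N(μ,δ) = −∫ Σ_{ω^N ∈ I^N} p_{ω^N}(x) · inf_{y ∈ B_N(x,ω^N,δ)} log p_{ω^N}(y) dμ(x), where B_N(x,ω^N,δ) = {y : ρ(S_{ω^n}(y), S_{ω^n}(x)) < δ for all 0 ≤ n ≤ N}. If h_{N₁}(μ,δ) and h_{N₂}(μ,δ) exist (are finite), then h_{N₁+N₂}(μ,δ) ≤ h_{N₁}(μ,δ) + h_{N₂}(μ,δ). -/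
open MeasureTheory Set
open scoped ENNReal NNReal

/-- `B_N(x, ω^N, δ)`: points whose trajectory along the word stays `δ`-close to that
of `x` for all times `0 ≤ n ≤ N`. -/
def ballN {I X : Type*} [MetricSpace X] (S : I → X → X) (δ : ℝ) (l : List I) (x : X) :
    Set X :=
  {y | ∀ m ≤ l.length, dist (iterWord S (l.take m) y) (iterWord S (l.take m) x) < δ}

/-- The integrand of `h_N(μ,δ)`:
`x ↦ Σ_{ω^N} p_{ω^N}(x) · inf_{y ∈ B_N(x,ω^N,δ)} log p_{ω^N}(y)`. -/
noncomputable def hIntegrand {I X : Type*} [Fintype I] [MetricSpace X]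
    (S : I → X → X) (p : I → X → ℝ) (δ : ℝ) (N : ℕ) (x : X) : ℝ :=
  ∑ v : Fin N → I, wtWord S p (List.ofFn v) x *
    sInf ((fun y => Real.log (wtWord S p (List.ofFn v) y)) '' ballN S δ (List.ofFn v) x)

/-- `h_N(μ,δ)`. -/
noncomputable def hN {I X : Type*} [Fintype I] [MetricSpace X] [MeasurableSpace X]
    (S : I → X → X) (p : I → X → ℝ) (μ : Measure X) (N : ℕ) (δ : ℝ) : ℝ :=
  -∫ x, hIntegrand S p δ N x ∂μ

section Aux

variable {I X : Type*}

@[simp] lemma iterWord_nil (S : I → X → X) (x : X) : iterWord S [] x = x := rfl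
@[simp] lemma iterWord_cons (S : I → X → X) (i : I) (l : List I) (x : X) :
    iterWord S (i :: l) x = iterWord S l (S i x) := rfl
@[simp] lemma wtWord_nil (S : I → X → X) (p : I → X → ℝ) (x : X) : wtWord S p [] x = 1 := rfl
@[simp] lemma wtWord_cons (S : I → X → X) (p : I → X → ℝ) (i : I) (l : List I) (x : X) :
    wtWord S p (i :: l) x = p i x * wtWord S p l (S i x) := rfl

lemma iterWord_append (S : I → X → X) (l₁ l₂ : List I) (x : X) :
    iterWord S (l₁ ++ l₂) x = iterWord S l₂ (iterWord S l₁ x) := by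
  induction l₁ generalizing x with
  | nil => simp
  | cons i l ih => simp [ih]

lemma wtWord_append (S : I → X → X) (p : I → X → ℝ) (l₁ l₂ : List I) (x : X) :
    wtWord S p (l₁ ++ l₂) x = wtWord S p l₁ x * wtWord S p l₂ (iterWord S l₁ x) := by
  induction l₁ generalizing x with
  | nil => simp
  | cons i l ih => simp [ih, mul_assoc]

lemma wtWord_pos {S : I → X → X} {p : I → X → ℝ} (hppos : ∀ i x, 0 < p i x)
    (l : List I) (x : X) : 0 < wtWord S p l x := by
  induction l generalizing x with
  | nil => simp
  | cons i l ih => exact mul_pos (hppos i x) (ih _)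

section Meas
variable [MeasurableSpace X]

lemma measurable_iterWord {S : I → X → X} (hS : ∀ i, Measurable (S i)) (l : List I) :
    Measurable (iterWord S l) := by
  induction l with
  | nil => exact measurable_id
  | cons i l ih => exact ih.comp (hS i)

lemma measurable_wtWord {S : I → X → X} {p : I → X → ℝ} (hS : ∀ i, Measurable (S i))
    (hp : ∀ i, Measurable (p i)) (l : List I) : Measurable (wtWord S p l) := by
  induction l with
  | nil => exact measurable_const
  | cons i l ih => exact (hp i).mul (ih.comp (hS i))

end Meas

variable [Fintype I]

lemma sum_succ_reindex (k : ℕ) (F : List I → ℝ) :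
    ∑ v : Fin (k + 1) → I, F (List.ofFn v)
      = ∑ i : I, ∑ w : Fin k → I, F (i :: List.ofFn w) := by
  refine (Fintype.sum_equiv (Fin.consEquiv (fun _ : Fin (k + 1) => I)).symm _
    (fun q => F (q.1 :: List.ofFn q.2)) fun v => ?_).trans (Fintype.sum_prod_type _)
  simp only [List.ofFn_succ]
  rfl

lemma sum_add_reindex (m n : ℕ) (F : List I → ℝ) :
    ∑ v : Fin (m + n) → I, F (List.ofFn v)
      = ∑ u : Fin m → I, ∑ w : Fin n → I, F (List.ofFn u ++ List.ofFn w) := by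
  refine (Fintype.sum_equiv
    ((Equiv.arrowCongr finSumFinEquiv.symm (Equiv.refl I)).trans
      (Equiv.sumArrowEquivProdArrow _ _ I))
    _ (fun q => F (List.ofFn q.1 ++ List.ofFn q.2)) fun v => ?_).trans
      (Fintype.sum_prod_type _)
  rw [List.ofFn_add (f := v)]
  simp [Equiv.sumArrowEquivProdArrow, Equiv.arrowCongr, Function.comp_def]
  rfl

lemma sum_wtWord {S : I → X → X} {p : I → X → ℝ} (hp1 : ∀ x, ∑ i : I, p i x = 1) :
    ∀ (k : ℕ) (x : X), ∑ v : Fin k → I, wtWord S p (List.ofFn v) x = 1 := by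
  intro k
  induction k with
  | zero => intro x; simp [Fintype.sum_unique]
  | succ k ih =>
      intro x
      rw [sum_succ_reindex k (fun l => wtWord S p l x)]
      simp only [wtWord_cons, ← Finset.mul_sum]
      simp [ih, hp1 x]

end Aux

section Pointwise

variable {I X : Type*} [Fintype I] [MetricSpace X]
variable {S : I → X → X} {p : I → X → ℝ} {δ : ℝ}

lemma mem_ballN_self (hδ : 0 < δ) (l : List I) (x : X) : x ∈ ballN S δ l x := by
  intro m _
  simpa using hδ

lemma ballN_append_left {l₁ l₂ : List I} {x y : X}
    (hy : y ∈ ballN S δ (l₁ ++ l₂) x) : y ∈ ballN S δ l₁ x := by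
  intro m hm
  have h := hy m (le_trans hm (by simp))
  rwa [List.take_append_of_le_length hm] at h

lemma ballN_append_right {l₁ l₂ : List I} {x y : X}
    (hy : y ∈ ballN S δ (l₁ ++ l₂) x) :
    iterWord S l₁ y ∈ ballN S δ l₂ (iterWord S l₁ x) := by
  intro m hm
  have := hy (l₁.length + m) (by simp; omega)
  rw [List.take_append, iterWord_append, iterWord_append] at this
  simpa [List.take_of_length_le (by omega : l₁.length ≤ l₁.length + m)] using this

lemma sInf_split (hbdd : ∀ (l : List I) (x : X),
      BddBelow ((fun y => Real.log (wtWord S p l y)) '' ballN S δ l x))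
    (hppos : ∀ i x, 0 < p i x) (hδ : 0 < δ) (l₁ l₂ : List I) (x : X) :
    sInf ((fun y => Real.log (wtWord S p l₁ y)) '' ballN S δ l₁ x)
      + sInf ((fun y => Real.log (wtWord S p l₂ y)) '' ballN S δ l₂ (iterWord S l₁ x))
    ≤ sInf ((fun y => Real.log (wtWord S p (l₁ ++ l₂) y)) '' ballN S δ (l₁ ++ l₂) x) := by
  refine le_csInf (⟨_, mem_image_of_mem _ (mem_ballN_self hδ _ x)⟩) ?_
  rintro b ⟨y, hy, rfl⟩
  dsimp only
  rw [wtWord_append, Real.log_mul (wtWord_pos hppos _ _).ne' (wtWord_pos hppos _ _).ne']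
  exact add_le_add
    (csInf_le (hbdd _ _) (mem_image_of_mem _ (ballN_append_left hy)))
    (csInf_le (hbdd _ _) (mem_image_of_mem _ (ballN_append_right hy)))

end Pointwise

section PW2
variable {I X : Type*} [Fintype I] [MetricSpace X]
variable {S : I → X → X} {p : I → X → ℝ} {δ : ℝ}

lemma hIntegrand_superadd (hbdd : ∀ (l : List I) (x : X),
      BddBelow ((fun y => Real.log (wtWord S p l y)) '' ballN S δ l x))
    (hppos : ∀ i x, 0 < p i x) (hp1 : ∀ x, ∑ i : I, p i x = 1) (hδ : 0 < δ)
    (N₁ N₂ : ℕ) (x : X) :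
    hIntegrand S p δ N₁ x
      + ∑ u : Fin N₁ → I, wtWord S p (List.ofFn u) x
          * hIntegrand S p δ N₂ (iterWord S (List.ofFn u) x)
    ≤ hIntegrand S p δ (N₁ + N₂) x := by
  unfold hIntegrand
  rw [sum_add_reindex N₁ N₂ (fun l => wtWord S p l x *
    sInf ((fun y => Real.log (wtWord S p l y)) '' ballN S δ l x))]
  have hstep : ∀ u : Fin N₁ → I, ∀ w : Fin N₂ → I,
      wtWord S p (List.ofFn u) x * wtWord S p (List.ofFn w) (iterWord S (List.ofFn u) x)
        * (sInf ((fun y => Real.log (wtWord S p (List.ofFn u) y)) '' ballN S δ (List.ofFn u) x)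
          + sInf ((fun y => Real.log (wtWord S p (List.ofFn w) y))
              '' ballN S δ (List.ofFn w) (iterWord S (List.ofFn u) x)))
      ≤ wtWord S p (List.ofFn u ++ List.ofFn w) x *
          sInf ((fun y => Real.log (wtWord S p (List.ofFn u ++ List.ofFn w) y))
            '' ballN S δ (List.ofFn u ++ List.ofFn w) x) := by
    intro u w
    rw [wtWord_append]
    exact mul_le_mul_of_nonneg_left (sInf_split hbdd hppos hδ _ _ x)
      (mul_nonneg (wtWord_pos hppos _ _).le (wtWord_pos hppos _ _).le)
  refine le_trans (le_of_eq ?_) (Finset.sum_le_sum fun u _ => Finset.sum_le_sum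
    fun w _ => hstep u w)
  -- algebraic identity
  have expand : ∀ u : Fin N₁ → I,
      ∑ w : Fin N₂ → I,
        wtWord S p (List.ofFn u) x * wtWord S p (List.ofFn w) (iterWord S (List.ofFn u) x)
        * (sInf ((fun y => Real.log (wtWord S p (List.ofFn u) y)) '' ballN S δ (List.ofFn u) x)
          + sInf ((fun y => Real.log (wtWord S p (List.ofFn w) y))
              '' ballN S δ (List.ofFn w) (iterWord S (List.ofFn u) x)))
      = wtWord S p (List.ofFn u) x
          * sInf ((fun y => Real.log (wtWord S p (List.ofFn u) y)) '' ballN S δ (List.ofFn u) x)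
        + wtWord S p (List.ofFn u) x
          * hIntegrand S p δ N₂ (iterWord S (List.ofFn u) x) := by
    intro u
    set y₀ := iterWord S (List.ofFn u) x
    set a := sInf ((fun y => Real.log (wtWord S p (List.ofFn u) y)) '' ballN S δ (List.ofFn u) x)
    have : ∀ w : Fin N₂ → I,
        wtWord S p (List.ofFn u) x * wtWord S p (List.ofFn w) y₀
          * (a + sInf ((fun y => Real.log (wtWord S p (List.ofFn w) y))
              '' ballN S δ (List.ofFn w) y₀))
        = wtWord S p (List.ofFn u) x * a * wtWord S p (List.ofFn w) y₀
          + wtWord S p (List.ofFn u) x * (wtWord S p (List.ofFn w) y₀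
            * sInf ((fun y => Real.log (wtWord S p (List.ofFn w) y))
              '' ballN S δ (List.ofFn w) y₀)) := fun w => by ring
    rw [Finset.sum_congr rfl fun w _ => this w, Finset.sum_add_distrib, ← Finset.mul_sum,
      ← Finset.mul_sum, sum_wtWord hp1, mul_one, hIntegrand]
  rw [Finset.sum_congr rfl fun u _ => expand u, Finset.sum_add_distrib]
  rfl
end PW2

section MeasurePart
variable {I X : Type*} [Fintype I] [MeasurableSpace X]
variable {S : I → X → X} {p : I → X → ℝ} {μ : Measure X}

lemma ifsKernel_measurable (hS : ∀ i, Measurable (S i)) (hp : ∀ i, Measurable (p i)) :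
    Measurable (ifsKernel S p) := by
  refine Measure.measurable_of_measurable_coe _ fun s hs => ?_
  have : (fun x => ifsKernel S p x s)
      = fun x => ∑ i : I, ENNReal.ofReal (p i x) * s.indicator 1 (S i x) := by
    funext x
    rw [ifsKernel, Measure.finset_sum_apply]
    exact Finset.sum_congr rfl fun i _ => by
      rw [Measure.smul_apply, Measure.dirac_apply' _ hs, smul_eq_mul]
  rw [this]
  exact Finset.measurable_sum _ fun i _ =>
    ((ENNReal.measurable_ofReal.comp (hp i)).mul
      ((measurable_one.indicator hs).comp (hS i)))

lemma measure_decomp (hS : ∀ i, Measurable (S i)) (hp : ∀ i, Measurable (p i))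
    (hμinv : μ.bind (ifsKernel S p) = μ) :
    μ = ∑ i : I, (μ.withDensity (fun x => ENNReal.ofReal (p i x))).map (S i) := by
  conv_lhs => rw [← hμinv]
  ext A hA
  rw [Measure.bind_apply hA (ifsKernel_measurable hS hp).aemeasurable, Measure.finset_sum_apply]
  have : ∀ x, ifsKernel S p x A = ∑ i : I, ENNReal.ofReal (p i x) * A.indicator 1 (S i x) := by
    intro x
    rw [ifsKernel, Measure.finset_sum_apply]
    exact Finset.sum_congr rfl fun i _ => by
      rw [Measure.smul_apply, Measure.dirac_apply' _ hA, smul_eq_mul]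
  simp_rw [this]
  rw [lintegral_finset_sum _ fun i _ =>
    show Measurable fun a => ENNReal.ofReal (p i a) * A.indicator 1 (S i a) from
    ((ENNReal.measurable_ofReal.comp (hp i)).mul
      ((measurable_one.indicator hA).comp (hS i)))]
  refine Finset.sum_congr rfl fun i _ => ?_
  rw [Measure.map_apply (hS i) hA, withDensity_apply _ ((hS i) hA), ← lintegral_indicator ((hS i) hA)]
  congr 1
  funext x
  by_cases hx : S i x ∈ A <;>
    simp [Set.indicator_apply, hx, Set.mem_preimage]

lemma null_preimage (hS : ∀ i, Measurable (S i)) (hp : ∀ i, Measurable (p i))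
    (hppos : ∀ i x, 0 < p i x) (hμinv : μ.bind (ifsKernel S p) = μ)
    (i : I) {A : Set X} (hA : μ A = 0) : μ (S i ⁻¹' A) = 0 := by
  obtain ⟨t, hAt, htm, ht0⟩ := exists_measurable_superset_of_null hA
  refine measure_mono_null (Set.preimage_mono hAt) ?_
  have hdec := measure_decomp hS hp hμinv
  have h0 : ((μ.withDensity (fun x => ENNReal.ofReal (p i x))).map (S i)) t = 0 := by
    have := congrArg (fun ν : Measure X => ν t) hdec
    simp only [Measure.finset_sum_apply] at this
    rw [ht0] at this
    exact (Finset.sum_eq_zero_iff.mp this.symm) i (Finset.mem_univ i)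
  rw [Measure.map_apply (hS i) htm, withDensity_apply _ ((hS i) htm)] at h0
  have := (setLIntegral_eq_zero_iff ((hS i) htm)
    (ENNReal.measurable_ofReal.comp (hp i))).mp h0
  rw [measure_eq_zero_iff_ae_notMem]
  filter_upwards [this] with x hx
  intro hmem
  exact absurd (hx hmem) (ENNReal.ofReal_pos.mpr (hppos i x)).ne'

lemma null_preimage_iter (hS : ∀ i, Measurable (S i)) (hp : ∀ i, Measurable (p i))
    (hppos : ∀ i x, 0 < p i x) (hμinv : μ.bind (ifsKernel S p) = μ)
    (l : List I) {A : Set X} (hA : μ A = 0) : μ (iterWord S l ⁻¹' A) = 0 := by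
  induction l generalizing A with
  | nil => exact hA
  | cons i l ih =>
      have : iterWord S (i :: l) ⁻¹' A = S i ⁻¹' (iterWord S l ⁻¹' A) := rfl
      rw [this]
      exact null_preimage hS hp hppos hμinv i (ih hA)

lemma ae_comp_iter (hS : ∀ i, Measurable (S i)) (hp : ∀ i, Measurable (p i))
    (hppos : ∀ i x, 0 < p i x) (hμinv : μ.bind (ifsKernel S p) = μ)
    (l : List I) {f g : X → ℝ} (hfg : f =ᵐ[μ] g) :
    (fun x => f (iterWord S l x)) =ᵐ[μ] (fun x => g (iterWord S l x)) := by
  have h0 : μ {x | ¬ f x = g x} = 0 := hfg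
  have : {x | ¬ f (iterWord S l x) = g (iterWord S l x)}
      = iterWord S l ⁻¹' {x | ¬ f x = g x} := rfl
  have h1 : μ {x | ¬ f (iterWord S l x) = g (iterWord S l x)} = 0 := by
    rw [this]; exact null_preimage_iter hS hp hppos hμinv l h0
  exact h1

end MeasurePart

section StepPart
variable {I X : Type*} [Fintype I] [MeasurableSpace X]
variable {S : I → X → X} {p : I → X → ℝ} {μ : Measure X}

lemma step_lemma (hS : ∀ i, Measurable (S i)) (hp : ∀ i, Measurable (p i))
    (hppos : ∀ i x, 0 < p i x) (hμinv : μ.bind (ifsKernel S p) = μ)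
    {g : X → ℝ} (hgm : Measurable g) (hgi : Integrable g μ) :
    Integrable (fun x => ∑ i : I, p i x * g (S i x)) μ ∧
      ∫ x, (∑ i : I, p i x * g (S i x)) ∂μ = ∫ x, g x ∂μ := by
  have hdec := measure_decomp hS hp hμinv
  have hq : ∀ i : I, Measurable fun x => (p i x).toNNReal :=
    fun i => (hp i).real_toNNReal
  have hwd : ∀ i : I, (μ.withDensity fun x => ENNReal.ofReal (p i x))
      = μ.withDensity fun x => ((fun x => (p i x).toNNReal) x : ℝ≥0∞) := fun i => rfl
  have hgi' : ∀ i : I, Integrable g ((μ.withDensity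
      (fun x => ENNReal.ofReal (p i x))).map (S i)) := by
    intro i
    have := hgi
    rw [hdec] at this
    exact (integrable_finset_sum_measure.mp this) i (Finset.mem_univ i)
  have hcomp : ∀ i : I, Integrable (g ∘ S i)
      (μ.withDensity fun x => ENNReal.ofReal (p i x)) := fun i =>
    (integrable_map_measure hgm.aestronglyMeasurable (hS i).aemeasurable).mp (hgi' i)
  have hsmul : ∀ i : I, Integrable (fun x => (p i x).toNNReal • g (S i x)) μ := by
    intro i
    have := hcomp i
    rw [hwd i] at this
    exact (integrable_withDensity_iff_integrable_smul (hq i)).mp this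
  have hterm_eq : ∀ i : I, (fun x => (p i x).toNNReal • g (S i x))
      = fun x => p i x * g (S i x) := by
    intro i
    funext x
    rw [NNReal.smul_def, Real.coe_toNNReal _ (hppos i x).le, smul_eq_mul]
  have hterm : ∀ i : I, Integrable (fun x => p i x * g (S i x)) μ := by
    intro i; rw [← hterm_eq i]; exact hsmul i
  constructor
  · exact integrable_finset_sum _ fun i _ => hterm i
  · have h1 : ∫ x, g x ∂μ = ∑ i : I, ∫ x, g x
        ∂((μ.withDensity (fun x => ENNReal.ofReal (p i x))).map (S i)) := by
      conv_lhs => rw [hdec]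
      exact integral_finset_sum_measure fun i _ => hgi' i
    have h2 : ∀ i : I, ∫ x, g x
        ∂((μ.withDensity (fun x => ENNReal.ofReal (p i x))).map (S i))
        = ∫ x, p i x * g (S i x) ∂μ := by
      intro i
      rw [integral_map (hS i).aemeasurable hgm.aestronglyMeasurable, hwd i,
        integral_withDensity_eq_integral_smul (hq i), hterm_eq i]
    rw [integral_finset_sum _ fun i _ => hterm i, h1]
    exact (Finset.sum_congr rfl fun i _ => (h2 i)).symm

lemma iterate_lemma (hS : ∀ i, Measurable (S i)) (hp : ∀ i, Measurable (p i))
    (hppos : ∀ i x, 0 < p i x) (hμinv : μ.bind (ifsKernel S p) = μ)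
    {g : X → ℝ} (hgm : Measurable g) (hgi : Integrable g μ) (k : ℕ) :
    Measurable (fun x => ∑ v : Fin k → I,
        wtWord S p (List.ofFn v) x * g (iterWord S (List.ofFn v) x)) ∧
    Integrable (fun x => ∑ v : Fin k → I,
        wtWord S p (List.ofFn v) x * g (iterWord S (List.ofFn v) x)) μ ∧
    ∫ x, (∑ v : Fin k → I,
        wtWord S p (List.ofFn v) x * g (iterWord S (List.ofFn v) x)) ∂μ = ∫ x, g x ∂μ := by
  induction k with
  | zero =>
      have he : (fun x => ∑ v : Fin 0 → I,
          wtWord S p (List.ofFn v) x * g (iterWord S (List.ofFn v) x)) = g := by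
        funext x
        rw [Fintype.sum_unique]
        simp
      rw [he]
      exact ⟨hgm, hgi, rfl⟩
  | succ k ih =>
      obtain ⟨ihm, ihi, ihe⟩ := ih
      set G : X → ℝ := fun x => ∑ v : Fin k → I,
        wtWord S p (List.ofFn v) x * g (iterWord S (List.ofFn v) x) with hG
      have he : (fun x => ∑ v : Fin (k+1) → I,
          wtWord S p (List.ofFn v) x * g (iterWord S (List.ofFn v) x))
          = fun x => ∑ i : I, p i x * G (S i x) := by
        funext x
        rw [sum_succ_reindex k (fun l => wtWord S p l x * g (iterWord S l x))]
        refine Finset.sum_congr rfl fun i _ => ?_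
        rw [hG, Finset.mul_sum]
        refine Finset.sum_congr rfl fun w _ => ?_
        simp [mul_assoc]
      rw [he]
      have hstep := step_lemma hS hp hppos hμinv ihm ihi
      refine ⟨?_, hstep.1, hstep.2.trans ihe⟩
      exact Finset.measurable_sum _ fun i _ => (hp i).mul (ihm.comp (hS i))

end StepPart

/-- For a measurable IFS with positive probabilities and ergodic
invariant probability measure `μ`, if `h_{N₁}(μ,δ)` and `h_{N₂}(μ,δ)` exist (are finite)
then `h_{N₁+N₂}(μ,δ) ≤ h_{N₁}(μ,δ) + h_{N₂}(μ,δ)`. -/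
theorem stmt16 {X I : Type*} [MetricSpace X] [TopologicalSpace.SeparableSpace X]
    [MeasurableSpace X] [BorelSpace X] [Fintype I] (hcard : 2 ≤ Fintype.card I)
    (S : I → X → X) (hS : ∀ i, Measurable (S i))
    (p : I → X → ℝ) (hp : ∀ i, Measurable (p i))
    (hppos : ∀ i x, 0 < p i x) (hp1 : ∀ x, ∑ i : I, p i x = 1)
    (μ : Measure X) [IsProbabilityMeasure μ] (hμinv : μ.bind (ifsKernel S p) = μ)
    (herg : ∀ A : Set X, MeasurableSet A →
      (∀ᵐ x ∂μ, ifsKernel S p x A = A.indicator (fun _ => (1 : ℝ≥0∞)) x) →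
      μ A = 0 ∨ μ A = 1)
    (δ : ℝ) (hδ : 0 < δ) (N₁ N₂ : ℕ)
    (hbdd : ∀ (l : List I) (x : X),
      BddBelow ((fun y => Real.log (wtWord S p l y)) '' ballN S δ l x))
    (hint₁ : Integrable (hIntegrand S p δ N₁) μ)
    (hint₂ : Integrable (hIntegrand S p δ N₂) μ)
    (hint₁₂ : Integrable (hIntegrand S p δ (N₁ + N₂)) μ) :
    hN S p μ (N₁ + N₂) δ ≤ hN S p μ N₁ δ + hN S p μ N₂ δ := by
  classical
  set g' : X → ℝ := hint₂.1.mk _ with hg'def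
  have hg'm : Measurable g' := hint₂.1.stronglyMeasurable_mk.measurable
  have hae : hIntegrand S p δ N₂ =ᵐ[μ] g' := hint₂.1.ae_eq_mk
  have hg'i : Integrable g' μ := hint₂.congr hae
  obtain ⟨hGm', hGi', hGe'⟩ := iterate_lemma hS hp hppos hμinv hg'm hg'i N₁
  set G : X → ℝ := fun x => ∑ u : Fin N₁ → I,
    wtWord S p (List.ofFn u) x * hIntegrand S p δ N₂ (iterWord S (List.ofFn u) x) with hGdef
  set G' : X → ℝ := fun x => ∑ u : Fin N₁ → I,
    wtWord S p (List.ofFn u) x * g' (iterWord S (List.ofFn u) x) with hG'def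
  have hGG' : G =ᵐ[μ] G' := by
    have h1 : ∀ᵐ x ∂μ, ∀ u : Fin N₁ → I,
        hIntegrand S p δ N₂ (iterWord S (List.ofFn u) x)
          = g' (iterWord S (List.ofFn u) x) :=
      ae_all_iff.mpr fun u => ae_comp_iter hS hp hppos hμinv _ hae
    filter_upwards [h1] with x hx
    exact Finset.sum_congr rfl fun u _ => by rw [hx u]
  have hGi : Integrable G μ := hGi'.congr hGG'.symm
  have hGe : ∫ x, G x ∂μ = ∫ x, hIntegrand S p δ N₂ x ∂μ :=
    (integral_congr_ae hGG').trans (hGe'.trans (integral_congr_ae hae.symm))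
  have hpt : (fun x => hIntegrand S p δ N₁ x + G x) ≤ hIntegrand S p δ (N₁ + N₂) :=
    fun x => hIntegrand_superadd hbdd hppos hp1 hδ N₁ N₂ x
  have key : ∫ x, (hIntegrand S p δ N₁ x + G x) ∂μ
      ≤ ∫ x, hIntegrand S p δ (N₁ + N₂) x ∂μ :=
    integral_mono (hint₁.add hGi) hint₁₂ hpt
  rw [integral_add hint₁ hGi, hGe] at key
  unfold hN
  linarith
end
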